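/- arXiv:2109.06110 — 7 statements merged into one kernel-verified Lean document; each statement's English description precedes it below -/
import Mathlib

section
/- Let G be an n-vertex graph with average degree d > 0. Then there exist real numbers D_1, D_2 ≥ d/4 and a non-empty bipartite subgraph G' of G with parts X_1 and X_2 such that: every x ∈ X_1 satisfies d_{G'}(x) ≥ D_1/(256·(log n)^2) and d_G(x) ≤ D_1, and every x ∈ X_2 satisfies d_{G'}(x) ≥ D_2/(256·(log n)^2) and d_G(x) ≤ D_2. -/
open Real

namespace Paper

/-- `G` contains a copy of `H`, i.e. `H` is a subgraph of `G` (up to injective homomorphism). -/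
def ContainsCopy {α : Type*} {β : Type*} (G : SimpleGraph α) (H : SimpleGraph β) : Prop :=
  ∃ f : H →g G, Function.Injective f

/-- The Turán (extremal) number: the maximum possible number of edges of an `n`-vertex graph
containing no copy of `H`. -/
noncomputable def exNumber (n : ℕ) {β : Type*} (H : SimpleGraph β) : ℕ :=
  sSup {N : ℕ | ∃ G : SimpleGraph (Fin n), ¬ ContainsCopy G H ∧ N = G.edgeSet.ncard}

/-- The (directed) edge relation of the graph `H_{k,ℓ}`, with `0`-based rows in `Fin (4k)`
and columns in `Fin (2ℓ)`.  Row `a` (0-based) corresponds to row `a+1` (1-based) of the paper,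
and similarly for columns. -/
def HRel (k ℓ : ℕ) (p q : Fin (4 * k) × Fin (2 * ℓ)) : Prop :=
  -- matching edges `x_{2i-1,j} x_{2i,j}`
  (p.2 = q.2 ∧ (p.1 : ℕ) % 2 = 0 ∧ (q.1 : ℕ) = (p.1 : ℕ) + 1)
  ∨ ((q.2 : ℕ) = ((p.2 : ℕ) + 1) % (2 * ℓ) ∧
      -- edges `x_{1,j} x_{1,j+1}` and `x_{4k,j} x_{4k,j+1}`
      ((p.1 = q.1 ∧ ((p.1 : ℕ) = 0 ∨ (p.1 : ℕ) = 4 * k - 1))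
        -- edges `x_{2i,j} x_{2i+1,j+1}`
        ∨ ((p.1 : ℕ) % 2 = 1 ∧ (q.1 : ℕ) = (p.1 : ℕ) + 1)
        -- edges `x_{2i+1,j} x_{2i,j+1}`
        ∨ ((p.1 : ℕ) % 2 = 0 ∧ (q.1 : ℕ) + 1 = (p.1 : ℕ))))

/-- The graph `H_{k,ℓ}` from the paper. -/
def HGraph (k ℓ : ℕ) : SimpleGraph (Fin (4 * k) × Fin (2 * ℓ)) :=
  SimpleGraph.fromRel (HRel k ℓ)

/-- The number of homomorphic `m`-cycles of `G`, i.e. `hom(C_m, G)`. -/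
noncomputable def homCount {V : Type*} (G : SimpleGraph V) (m : ℕ) : ℕ :=
  Nat.card {x : ZMod m → V // ∀ i, G.Adj (x i) (x (i + 1))}

/-- The number of (unlabelled) copies of `C₄` in `G`. -/
noncomputable def c4Count {V : Type*} (G : SimpleGraph V) : ℕ :=
  Nat.card {x : ZMod 4 → V // Function.Injective x ∧ ∀ i, G.Adj (x i) (x (i + 1))} / 8

/-- The number of (unlabelled) copies of `C₄` in `G` containing the edge `e`. -/
noncomputable def c4CountEdge {V : Type*} (G : SimpleGraph V) (e : Sym2 V) : ℕ :=
  Nat.card {x : ZMod 4 → V // Function.Injective x ∧ (∀ i, G.Adj (x i) (x (i + 1))) ∧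
    ∃ i, s(x i, x (i + 1)) = e} / 8

/-- Definition 2.1: a `β`-good set `C ⊆ V(G)^{8k}`. -/
def IsGood {V : Type*} (G : SimpleGraph V) (k : ℕ) (β : ℝ) (C : Set (ZMod (8 * k) → V)) :
    Prop :=
  ∃ s : ℝ, 0 < s ∧
    (∀ x ∈ C, Function.Injective x ∧ ∀ i, G.Adj (x i) (x (i + 1))) ∧
    (∀ y ∈ C, ∀ i : ZMod (8 * k),
      (({x ∈ C | ∀ j, j ≠ i → x j = y j}).ncard : ℝ) ≤ s) ∧
    (∀ i : ZMod (8 * k),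
      (({y : {j : ZMod (8 * k) // j ≠ i + 1 ∧ j ≠ i + 2} → V |
          ∃ x ∈ C, ∀ j : {j : ZMod (8 * k) // j ≠ i + 1 ∧ j ≠ i + 2}, x j.1 = y j}).ncard : ℝ)
        ≤ β * (C.ncard : ℝ) / (16 * (k : ℝ) * s))

/-- Definition 2.2: a `β`-nice set `C ⊆ V(G)^{8k}`. -/
def IsNice {V : Type*} (G : SimpleGraph V) (k : ℕ) (β : ℝ) (C : Set (ZMod (8 * k) → V)) :
    Prop :=
  (∀ x ∈ C, Function.Injective x ∧ ∀ i, G.Adj (x i) (x (i + 1))) ∧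
  (∀ i : ZMod (8 * k), ∀ y : ZMod (8 * k) → V, ∀ u : V,
    (({x ∈ C | (∀ j, j ≠ i + 1 → j ≠ i + 2 → x j = y j) ∧
        (x (i + 1) = u ∨ x (i + 2) = u)}).ncard : ℝ)
      ≤ β * (({x ∈ C | ∀ j, j ≠ i + 1 → j ≠ i + 2 → x j = y j}).ncard : ℝ))

end Paper

open Finset

namespace Stmt5Aux
variable {V : Type*} [Fintype V] [DecidableEq V] (G : SimpleGraph V) [DecidableRel G.Adj]

def crossCount (A B : Finset V) : ℕ := ∑ x ∈ A, (G.neighborFinset x ∩ B).card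

lemma card_nb_inter (x : V) (B : Finset V) :
    (G.neighborFinset x ∩ B).card = ∑ y ∈ B, if G.Adj x y then 1 else 0 := by
  rw [Finset.inter_comm, ← Finset.filter_mem_eq_inter, Finset.card_filter]
  simp [SimpleGraph.mem_neighborFinset]

lemma crossCount_comm (A B : Finset V) : crossCount G A B = crossCount G B A := by
  unfold crossCount
  simp_rw [card_nb_inter]
  rw [Finset.sum_comm]
  congr 1; ext y; congr 1; ext x
  simp [G.adj_comm]

lemma crossCount_erase_left {A : Finset V} (B : Finset V) {x : V} (hx : x ∈ A) :
    crossCount G A B = (G.neighborFinset x ∩ B).card + crossCount G (A.erase x) B :=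
  (Finset.add_sum_erase A _ hx).symm

lemma crossCount_erase_right (A : Finset V) {B : Finset V} {y : V} (hy : y ∈ B) :
    crossCount G A B = (G.neighborFinset y ∩ A).card + crossCount G A (B.erase y) := by
  rw [crossCount_comm, crossCount_erase_left G _ hy, crossCount_comm]

lemma crossCount_insert_left (B : Finset V) {A : Finset V} {x : V} (hx : x ∉ A) :
    crossCount G (insert x A) B = (G.neighborFinset x ∩ B).card + crossCount G A B :=
  Finset.sum_insert hx

lemma crossCount_insert_right (A : Finset V) {B : Finset V} {y : V} (hy : y ∉ B) :
    crossCount G A (insert y B) = (G.neighborFinset y ∩ A).card + crossCount G A B := by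
  rw [crossCount_comm, crossCount_insert_left G _ hy, crossCount_comm]

lemma crossCount_mono_right (A : Finset V) {B B' : Finset V} (h : B ⊆ B') :
    crossCount G A B ≤ crossCount G A B' :=
  Finset.sum_le_sum fun _ _ => Finset.card_le_card (Finset.inter_subset_inter (le_refl _) h)

lemma crossCount_pos {A B : Finset V} (h : 0 < crossCount G A B) :
    ∃ x ∈ A, ∃ y ∈ B, G.Adj x y := by
  have : ∃ x ∈ A, 0 < (G.neighborFinset x ∩ B).card := by
    by_contra hc
    push_neg at hc
    have : crossCount G A B = 0 := Finset.sum_eq_zero fun x hx => Nat.le_zero.mp (hc x hx)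
    omega
  obtain ⟨x, hx, hcard⟩ := this
  rw [Finset.card_pos] at hcard
  obtain ⟨y, hy⟩ := hcard
  simp only [Finset.mem_inter, SimpleGraph.mem_neighborFinset] at hy
  exact ⟨x, hx, y, hy.2, hy.1⟩

lemma trim (θ₁ θ₂ : ℝ) (hθ₁ : 0 ≤ θ₁) (hθ₂ : 0 ≤ θ₂) :
    ∀ N (A B : Finset V), A.card + B.card ≤ N →
    (A.card : ℝ) * θ₁ + (B.card : ℝ) * θ₂ < (crossCount G A B : ℝ) →
    ∃ A' B', A' ⊆ A ∧ B' ⊆ B ∧ 0 < crossCount G A' B' ∧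
      (∀ x ∈ A', θ₁ ≤ ((G.neighborFinset x ∩ B').card : ℝ)) ∧
      (∀ y ∈ B', θ₂ ≤ ((G.neighborFinset y ∩ A').card : ℝ)) := by
  intro N
  induction N with
  | zero =>
    intro A B hN h
    have hA : A = ∅ := Finset.card_eq_zero.mp (by omega)
    subst hA
    simp [crossCount] at h
    nlinarith [Nat.cast_nonneg (α := ℝ) B.card]
  | succ N ih =>
    intro A B hN h
    by_cases h₁ : ∃ x ∈ A, ((G.neighborFinset x ∩ B).card : ℝ) < θ₁
    · obtain ⟨x, hxA, hx⟩ := h₁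
      have hc1 : 1 ≤ A.card := Finset.card_pos.mpr ⟨x, hxA⟩
      have herase := crossCount_erase_left G B hxA
      have hcard : (A.erase x).card = A.card - 1 := Finset.card_erase_of_mem hxA
      obtain ⟨A', B', hA', hB', rest⟩ := ih (A.erase x) B (by omega) (by
        rw [hcard]
        have hcast : ((A.card - 1 : ℕ) : ℝ) = (A.card : ℝ) - 1 := by
          push_cast [hc1]; ring
        rw [hcast]
        have h2 : (crossCount G (A.erase x) B : ℝ)
            = (crossCount G A B : ℝ) - ((G.neighborFinset x ∩ B).card : ℝ) := by
          rw [herase]; push_cast; ring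
        rw [h2]; linarith)
      exact ⟨A', B', hA'.trans (Finset.erase_subset _ _), hB', rest⟩
    · by_cases h₂ : ∃ y ∈ B, ((G.neighborFinset y ∩ A).card : ℝ) < θ₂
      · obtain ⟨y, hyB, hy⟩ := h₂
        have hc1 : 1 ≤ B.card := Finset.card_pos.mpr ⟨y, hyB⟩
        have herase := crossCount_erase_right G A hyB
        have hcard : (B.erase y).card = B.card - 1 := Finset.card_erase_of_mem hyB
        obtain ⟨A', B', hA', hB', rest⟩ := ih A (B.erase y) (by omega) (by
          rw [hcard]
          have hcast : ((B.card - 1 : ℕ) : ℝ) = (B.card : ℝ) - 1 := by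
            push_cast [hc1]; ring
          rw [hcast]
          have h2 : (crossCount G A (B.erase y) : ℝ)
              = (crossCount G A B : ℝ) - ((G.neighborFinset y ∩ A).card : ℝ) := by
            rw [herase]; push_cast; ring
          rw [h2]; linarith)
        exact ⟨A', B', hA', hB'.trans (Finset.erase_subset _ _), rest⟩
      · push_neg at h₁ h₂
        refine ⟨A, B, le_refl _, le_refl _, ?_, h₁, h₂⟩
        have hpos : (0:ℝ) < (crossCount G A B : ℝ) := by
          have : (0:ℝ) ≤ (A.card : ℝ) * θ₁ + (B.card : ℝ) * θ₂ := by positivity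
          linarith
        exact_mod_cast hpos

lemma card_inter_insert (s T : Finset V) (v : V) (hv : v ∉ T) :
    (s ∩ insert v T).card = (s ∩ T).card + if v ∈ s then 1 else 0 := by
  by_cases h : v ∈ s
  · rw [if_pos h, Finset.inter_insert_of_mem h,
      Finset.card_insert_of_notMem (fun hc => hv (Finset.mem_inter.mp hc).2)]
  · rw [if_neg h, Finset.inter_insert_of_notMem h, add_zero]

lemma crossCount_insert_insert {A : Finset V} {v : V} (hv : v ∉ A) :
    crossCount G (insert v A) (insert v A)
      = crossCount G A A + 2 * (G.neighborFinset v ∩ A).card := by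
  rw [crossCount_insert_left G _ hv]
  have h1 : (G.neighborFinset v ∩ insert v A).card = (G.neighborFinset v ∩ A).card := by
    rw [card_inter_insert _ _ _ hv, if_neg (by simp), add_zero]
  have h2 : crossCount G A (insert v A) = crossCount G A A + (G.neighborFinset v ∩ A).card := by
    unfold crossCount
    have hh : ∀ x ∈ A, (G.neighborFinset x ∩ insert v A).card
        = (G.neighborFinset x ∩ A).card + if v ∈ G.neighborFinset x then 1 else 0 :=
      fun x _ => card_inter_insert _ _ _ hv
    rw [Finset.sum_congr rfl hh, Finset.sum_add_distrib]
    congr 1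
    have hfe : (A.filter fun x => v ∈ G.neighborFinset x) = G.neighborFinset v ∩ A := by
      ext x; simp [SimpleGraph.mem_neighborFinset, G.adj_comm, and_comm]
    rw [← hfe, Finset.card_filter]
  rw [h1, h2]; ring

lemma maxcut : ∀ A : Finset V, ∃ S ⊆ A, crossCount G A A ≤ 4 * crossCount G S (A \ S) := by
  intro A
  induction A using Finset.induction_on with
  | empty => exact ⟨∅, by simp, by simp [crossCount]⟩
  | @insert v A hv ih =>
    obtain ⟨S, hS, hIH⟩ := ih
    set c₁ := (G.neighborFinset v ∩ S).card with hc₁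
    set c₂ := (G.neighborFinset v ∩ (A \ S)).card with hc₂
    have hdv : (G.neighborFinset v ∩ A).card = c₁ + c₂ := by
      rw [← Finset.card_union_of_disjoint, ← Finset.inter_union_distrib_left,
        Finset.union_sdiff_of_subset hS]
      exact Finset.disjoint_of_subset_left (Finset.inter_subset_right)
        (Finset.disjoint_of_subset_right (Finset.inter_subset_right) Finset.disjoint_sdiff)
    have hkey := crossCount_insert_insert G hv
    rcases le_or_gt c₁ c₂ with hc | hc
    · refine ⟨insert v S, Finset.insert_subset_insert v hS, ?_⟩
      have hvS : v ∉ S := fun h => hv (hS h)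
      have hsd : insert v A \ insert v S = A \ S := by
        ext a
        simp only [Finset.mem_sdiff, Finset.mem_insert, not_or]
        constructor
        · rintro ⟨h | h, h2, h3⟩
          · exact absurd h h2
          · exact ⟨h, h3⟩
        · intro ⟨h, h2⟩
          exact ⟨Or.inr h, fun hc => hv (hc ▸ h), h2⟩
      rw [hsd, crossCount_insert_left G _ hvS, hkey]
      omega
    · refine ⟨S, hS.trans (Finset.subset_insert v A), ?_⟩
      have hvAS : v ∉ A \ S := fun h => hv (Finset.mem_sdiff.mp h).1
      have hsd : insert v A \ S = insert v (A \ S) := by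
        rw [Finset.insert_sdiff_of_notMem _ (fun h => hv (hS h))]
      rw [hsd, crossCount_insert_right G _ hvAS, hkey]
      omega

end Stmt5Aux

set_option maxHeartbeats 2000000 in
/-- Lemma 2.3: existence of an almost-biregular bipartite subgraph. -/
theorem statement_5 {V : Type*} [Fintype V] (n : ℕ) (hn : Fintype.card V = n)
    (G : SimpleGraph V) (d : ℝ) (hd : d = 2 * (G.edgeSet.ncard : ℝ) / (n : ℝ)) (hd0 : 0 < d) :
    ∃ D₁ D₂ : ℝ, d / 4 ≤ D₁ ∧ d / 4 ≤ D₂ ∧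
      ∃ (G' : SimpleGraph V) (X₁ X₂ : Set V), G' ≤ G ∧ G' ≠ ⊥ ∧ Disjoint X₁ X₂ ∧
        (∀ u v, G'.Adj u v → (u ∈ X₁ ∧ v ∈ X₂) ∨ (u ∈ X₂ ∧ v ∈ X₁)) ∧
        (∀ x ∈ X₁, D₁ / (256 * (Real.logb 2 n) ^ 2) ≤ ((G'.neighborSet x).ncard : ℝ) ∧
          ((G.neighborSet x).ncard : ℝ) ≤ D₁) ∧
        (∀ x ∈ X₂, D₂ / (256 * (Real.logb 2 n) ^ 2) ≤ ((G'.neighborSet x).ncard : ℝ) ∧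
          ((G.neighborSet x).ncard : ℝ) ≤ D₂) := by
  classical
  open Stmt5Aux in
  -- basic notation
  set eN : ℕ := G.edgeFinset.card with heN
  have hedge : (G.edgeSet.ncard : ℝ) = (eN : ℝ) := by
    rw [heN, SimpleGraph.edgeFinset, Set.ncard_eq_toFinset_card']
  rw [hedge] at hd
  -- n is positive, eN positive
  have hn0 : 0 < n := by
    by_contra hc
    push_neg at hc
    interval_cases n
    rw [hd] at hd0; norm_num at hd0
  have hnR : (0:ℝ) < (n:ℝ) := by exact_mod_cast hn0
  have heN0 : 0 < eN := by
    by_contra hc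
    push_neg at hc
    have : eN = 0 := by omega
    rw [hd, this] at hd0
    norm_num at hd0
  have heNR : (0:ℝ) < (eN:ℝ) := by exact_mod_cast heN0
  have hdn : d * (n:ℝ) = 2 * (eN:ℝ) := by
    rw [hd]; field_simp
  -- n ≥ 2
  have hn2 : 2 ≤ n := by
    obtain ⟨e, he⟩ := Finset.card_pos.mp heN0
    rw [SimpleGraph.mem_edgeFinset] at he
    induction e with
    | _ u v =>
      have hadj : G.Adj u v := he
      have : 1 < Fintype.card V := Fintype.one_lt_card_iff_nontrivial.mpr
        ⟨⟨u, v, hadj.ne⟩⟩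
      omega
  -- the logarithm
  set L : ℝ := Real.logb 2 (n : ℝ) with hLdef
  have hL1 : 1 ≤ L := by
    rw [hLdef, show (1:ℝ) = Real.logb 2 2 by simp]
    exact Real.logb_le_logb_of_le (by norm_num) (by norm_num) (by exact_mod_cast hn2)
  have hL0 : 0 < L := lt_of_lt_of_le one_pos hL1
  -- degree sum
  have hsum : ∑ v, G.degree v = 2 * eN := SimpleGraph.sum_degrees_eq_twice_card_edges G
  -- the set of vertices of large degree
  set W : Finset V := Finset.univ.filter (fun v => d / 4 ≤ (G.degree v : ℝ)) with hW
  set Wc : Finset V := Finset.univ.filter (fun v => ¬ (d / 4 ≤ (G.degree v : ℝ))) with hWc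
  have hinterW : ∀ s : Finset V, s ∩ W = s.filter (fun v => d / 4 ≤ (G.degree v : ℝ)) := by
    intro s; ext x; simp [hW]
  have hinterWc : ∀ s : Finset V, s ∩ Wc = s.filter (fun v => ¬ (d / 4 ≤ (G.degree v : ℝ))) := by
    intro s; ext x; simp [hWc]
  have hcross_univ : ∀ A : Finset V, crossCount G A Finset.univ = ∑ x ∈ A, G.degree x := by
    intro A
    unfold Stmt5Aux.crossCount
    apply Finset.sum_congr rfl
    intro x _
    rw [Finset.inter_univ]
    exact G.card_neighborFinset_eq_degree x
  have c1 : crossCount G Finset.univ Finset.univ = 2 * eN := by rw [hcross_univ]; exact hsum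
  have c2 : crossCount G Finset.univ Finset.univ
      = crossCount G W Finset.univ + crossCount G Wc Finset.univ := by
    unfold Stmt5Aux.crossCount
    rw [hW, hWc]
    exact (Finset.sum_filter_add_sum_filter_not _ _ _).symm
  have c3 : crossCount G W Finset.univ = crossCount G W W + crossCount G W Wc := by
    unfold Stmt5Aux.crossCount
    rw [← Finset.sum_add_distrib]
    apply Finset.sum_congr rfl
    intro x _
    rw [Finset.inter_univ, hinterW, hinterWc]
    exact (Finset.card_filter_add_card_filter_not _).symm
  have c4 : crossCount G W Wc ≤ crossCount G Wc Finset.univ := by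
    rw [crossCount_comm]
    exact crossCount_mono_right G Wc (Finset.subset_univ W)
  have c5 : (crossCount G Wc Finset.univ : ℝ) ≤ (eN : ℝ) / 2 := by
    rw [hcross_univ]
    push_cast
    calc (∑ x ∈ Wc, (G.degree x : ℝ)) ≤ ∑ _x ∈ Wc, d / 4 := by
          apply Finset.sum_le_sum
          intro x hx
          rw [hWc, Finset.mem_filter] at hx
          linarith [hx.2]
      _ = (Wc.card : ℝ) * (d / 4) := by rw [Finset.sum_const]; ring
      _ ≤ (n : ℝ) * (d / 4) := by
          apply mul_le_mul_of_nonneg_right _ (by linarith)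
          have : Wc.card ≤ Fintype.card V := Finset.card_le_card (Finset.subset_univ _)
          rw [hn] at this
          exact_mod_cast this
      _ = (eN : ℝ) / 2 := by nlinarith [hdn]
  have hWW : (eN : ℝ) ≤ (crossCount G W W : ℝ) := by
    have h24 : (crossCount G W Wc : ℝ) ≤ (eN : ℝ) / 2 :=
      le_trans (by exact_mod_cast c4) c5
    have hc12 := c1 ▸ c2
    have hc : (2:ℝ) * eN
        = (crossCount G W Finset.univ : ℝ) + (crossCount G Wc Finset.univ : ℝ) := by
      exact_mod_cast hc12
    have hc3 : (crossCount G W Finset.univ : ℝ)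
        = (crossCount G W W : ℝ) + (crossCount G W Wc : ℝ) := by exact_mod_cast c3
    linarith
  -- max cut
  obtain ⟨S, hSW, hcut⟩ := maxcut G W
  set B0 : Finset V := W \ S with hB0
  have hcutR : (eN : ℝ) ≤ 4 * (crossCount G S B0 : ℝ) := by
    have : (crossCount G W W : ℝ) ≤ 4 * (crossCount G S B0 : ℝ) := by exact_mod_cast hcut
    linarith
  -- dyadic classes
  set T : ℕ := Nat.log 2 n + 1 with hT
  have hdegW : ∀ v ∈ W, 1 ≤ G.degree v ∧ G.degree v ≤ n := by
    intro v hv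
    rw [hW, Finset.mem_filter] at hv
    constructor
    · by_contra hc
      push_neg at hc
      have : G.degree v = 0 := by omega
      rw [this] at hv
      norm_num at hv
      linarith
    · have := G.degree_lt_card_verts v
      rw [hn] at this
      omega
  -- dyadic class index
  set idx : V → ℕ := fun v => Nat.log 2 (G.degree v) with hidxdef
  have hidxT : ∀ v ∈ W, idx v < T := by
    intro v hv
    have h2 := (hdegW v hv).2
    have h3 : Nat.log 2 (G.degree v) ≤ Nat.log 2 n := Nat.log_mono_right h2
    have h4 : idx v = Nat.log 2 (G.degree v) := rfl
    rw [h4, hT]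
    omega
  have hcc : ∀ (s A : Finset V), s ⊆ W →
      crossCount G s A = ∑ k ∈ Finset.range T, crossCount G (s.filter (fun v => idx v = k)) A := by
    intro s A hs
    unfold Stmt5Aux.crossCount
    exact (Finset.sum_fiberwise_of_maps_to (fun x hx => Finset.mem_range.mpr (hidxT x (hs hx))) _).symm
  have hB0W : B0 ⊆ W := Finset.sdiff_subset
  have hdecomp : crossCount G S B0 = ∑ p ∈ Finset.range T ×ˢ Finset.range T,
      crossCount G (S.filter (fun v => idx v = p.1)) (B0.filter (fun v => idx v = p.2)) := by
    rw [Finset.sum_product, hcc S B0 hSW]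
    apply Finset.sum_congr rfl
    intro i _
    rw [crossCount_comm, hcc B0 _ hB0W]
    apply Finset.sum_congr rfl
    intro j _
    exact crossCount_comm G _ _
  have hT1 : 1 ≤ T := by rw [hT]; omega
  have hTR : (0:ℝ) < (T:ℝ) := by exact_mod_cast hT1
  -- pigeonhole
  have hex : ∃ p ∈ Finset.range T ×ˢ Finset.range T,
      (crossCount G S B0 : ℝ) ≤ ((T:ℝ)^2) *
        (crossCount G (S.filter (fun v => idx v = p.1)) (B0.filter (fun v => idx v = p.2)) : ℝ) := by
    by_contra hcon
    push_neg at hcon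
    have hlt : ∀ p ∈ Finset.range T ×ˢ Finset.range T,
        ((crossCount G (S.filter (fun v => idx v = p.1)) (B0.filter (fun v => idx v = p.2)) : ℕ) : ℝ)
          < (crossCount G S B0 : ℝ) / (T:ℝ)^2 := by
      intro p hp
      have h := hcon p hp
      rw [lt_div_iff₀ (by positivity)]
      nlinarith [h]
    have hne : (Finset.range T ×ˢ Finset.range T).Nonempty := by
      apply Finset.Nonempty.product <;> exact ⟨0, Finset.mem_range.mpr (by omega)⟩
    have hsumlt := Finset.sum_lt_sum_of_nonempty hne hlt
    rw [Finset.sum_const] at hsumlt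
    have hcardp : (Finset.range T ×ˢ Finset.range T).card = T * T := by
      rw [Finset.card_product, Finset.card_range]
    rw [hcardp] at hsumlt
    have hcast : ∑ p ∈ Finset.range T ×ˢ Finset.range T,
        ((crossCount G (S.filter (fun v => idx v = p.1)) (B0.filter (fun v => idx v = p.2)) : ℕ) : ℝ)
          = (crossCount G S B0 : ℝ) := by
      rw [← Nat.cast_sum]
      exact_mod_cast congrArg (Nat.cast : ℕ → ℝ) hdecomp.symm
    rw [hcast, nsmul_eq_mul] at hsumlt
    have : (T:ℝ) * T * ((crossCount G S B0 : ℝ) / (T:ℝ)^2) = (crossCount G S B0 : ℝ) := by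
      field_simp
    rw [Nat.cast_mul, this] at hsumlt
    exact lt_irrefl _ hsumlt
  obtain ⟨⟨i, j⟩, hpmem, hpig⟩ := hex
  set A1 : Finset V := S.filter (fun v => idx v = i) with hA1
  set B1 : Finset V := B0.filter (fun v => idx v = j) with hB1
  -- T is at most 2L
  have hTle : (T:ℝ) ≤ 2 * L := by
    have h1 : ((Nat.log 2 n : ℕ) : ℝ) ≤ L := by
      rw [hLdef]
      exact Real.natLog_le_logb n 2
    rw [hT]
    push_cast
    linarith
  -- lower bound on the edge count of the chosen pair
  have hmlow : (eN : ℝ) ≤ 16 * L^2 * (crossCount G A1 B1 : ℝ) := by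
    have hm0' : (0:ℝ) ≤ (crossCount G A1 B1 : ℝ) := Nat.cast_nonneg _
    have hT2 : (T:ℝ)^2 ≤ 4 * L^2 := by nlinarith [hTle, hTR.le, hL0.le]
    have h5 : (T:ℝ)^2 * (crossCount G A1 B1 : ℝ) ≤ 4 * L^2 * (crossCount G A1 B1 : ℝ) :=
      mul_le_mul_of_nonneg_right hT2 hm0'
    linarith [hcutR, hpig]
  have hm0 : 0 < crossCount G A1 B1 := by
    by_contra hc
    push_neg at hc
    have : crossCount G A1 B1 = 0 := by omega
    rw [this] at hmlow
    norm_num at hmlow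
    linarith
  -- degree bounds on classes
  have hdeg_cls : ∀ (k : ℕ) (s : Finset V), s ⊆ W →
      ∀ x ∈ s.filter (fun v => idx v = k),
        d/4 ≤ (G.degree x : ℝ) ∧ (G.degree x : ℝ) ≤ (2:ℝ)^(k+1) ∧
          (2:ℝ)^(k+1)/2 ≤ (G.degree x : ℝ) := by
    intro k s hs x hx
    rw [Finset.mem_filter] at hx
    obtain ⟨hxs, hxk⟩ := hx
    have hxW : x ∈ W := hs hxs
    have hd4 : d/4 ≤ (G.degree x : ℝ) := by
      rw [hW, Finset.mem_filter] at hxW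
      exact hxW.2
    have hdeg1 : 1 ≤ G.degree x := (hdegW x hxW).1
    refine ⟨hd4, ?_, ?_⟩
    · have hup : G.degree x < 2^(k+1) := by
        have := Nat.lt_pow_succ_log_self (b := 2) (by norm_num) (G.degree x)
        rw [hidxdef] at hxk
        simp only at hxk
        rw [hxk] at this
        exact this
      have : (G.degree x : ℝ) < ((2^(k+1) : ℕ) : ℝ) := by exact_mod_cast hup
      push_cast at this
      linarith
    · have hlow : 2^k ≤ G.degree x := by
        have := Nat.pow_log_le_self 2 (x := G.degree x) (by omega)
        rw [hidxdef] at hxk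
        simp only at hxk
        rw [hxk] at this
        exact this
      have h2 : ((2^k : ℕ) : ℝ) ≤ (G.degree x : ℝ) := by exact_mod_cast hlow
      push_cast at h2
      rw [pow_succ]
      linarith
  -- class size bounds
  have hcard_cls : ∀ (k : ℕ) (s : Finset V), s ⊆ W →
      ((s.filter (fun v => idx v = k)).card : ℝ) * ((2:ℝ)^(k+1)/2) ≤ 2 * (eN : ℝ) := by
    intro k s hs
    have h1 : ∑ x ∈ s.filter (fun v => idx v = k), (G.degree x : ℝ) ≤ 2 * (eN : ℝ) := by
      have hsub : ∑ x ∈ s.filter (fun v => idx v = k), (G.degree x : ℝ)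
          ≤ ∑ x : V, (G.degree x : ℝ) :=
        Finset.sum_le_sum_of_subset_of_nonneg (Finset.subset_univ _)
          (fun _ _ _ => Nat.cast_nonneg _)
      have htot : ∑ x : V, (G.degree x : ℝ) = 2 * (eN : ℝ) := by
        rw [← Nat.cast_sum]
        exact_mod_cast congrArg (Nat.cast : ℕ → ℝ) hsum
      linarith
    have h2 : ((s.filter (fun v => idx v = k)).card) • ((2:ℝ)^(k+1)/2)
        ≤ ∑ x ∈ s.filter (fun v => idx v = k), (G.degree x : ℝ) :=
      Finset.card_nsmul_le_sum _ _ _ (fun x hx => (hdeg_cls k s hs x hx).2.2)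
    rw [nsmul_eq_mul] at h2
    linarith
  -- define D₁, D₂ and the thresholds
  set D₁ : ℝ := (2:ℝ)^(i+1) with hD₁
  set D₂ : ℝ := (2:ℝ)^(j+1) with hD₂
  have hD₁0 : 0 < D₁ := by positivity
  have hD₂0 : 0 < D₂ := by positivity
  set θ₁ : ℝ := D₁ / (256 * L^2) with hθ₁
  set θ₂ : ℝ := D₂ / (256 * L^2) with hθ₂
  have hθ₁0 : 0 ≤ θ₁ := by positivity
  have hθ₂0 : 0 ≤ θ₂ := by positivity
  -- budget for trimming
  have e1 : (A1.card : ℝ) * θ₁ ≤ (eN : ℝ) / (64 * L^2) := by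
    have hc := hcard_cls i S hSW
    rw [← hA1] at hc
    rw [hθ₁, show (A1.card : ℝ) * (D₁ / (256 * L^2)) = ((A1.card : ℝ) * D₁) / (256 * L^2) by ring,
      show (eN : ℝ) / (64 * L^2) = (4 * (eN:ℝ)) / (256 * L^2) by ring]
    rw [← hD₁] at hc
    have h6 : (A1.card : ℝ) * D₁ ≤ 4 * (eN : ℝ) := by linarith [hc]
    have h7 := mul_le_mul_of_nonneg_right h6 (by positivity : (0:ℝ) ≤ 256 * L^2)
    rw [div_le_div_iff₀ (by positivity) (by positivity)]
    linarith [h7]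
  have e2 : (B1.card : ℝ) * θ₂ ≤ (eN : ℝ) / (64 * L^2) := by
    have hc := hcard_cls j B0 hB0W
    rw [← hB1] at hc
    rw [hθ₂, show (B1.card : ℝ) * (D₂ / (256 * L^2)) = ((B1.card : ℝ) * D₂) / (256 * L^2) by ring,
      show (eN : ℝ) / (64 * L^2) = (4 * (eN:ℝ)) / (256 * L^2) by ring]
    rw [← hD₂] at hc
    have h6 : (B1.card : ℝ) * D₂ ≤ 4 * (eN : ℝ) := by linarith [hc]
    have h7 := mul_le_mul_of_nonneg_right h6 (by positivity : (0:ℝ) ≤ 256 * L^2)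
    rw [div_le_div_iff₀ (by positivity) (by positivity)]
    linarith [h7]
  have e3 : (eN : ℝ) / (16 * L^2) ≤ (crossCount G A1 B1 : ℝ) := by
    rw [div_le_iff₀ (by positivity)]
    nlinarith [hmlow]
  have e4 : (eN : ℝ) / (64 * L^2) + (eN : ℝ) / (64 * L^2) < (eN : ℝ) / (16 * L^2) := by
    rw [← add_div, div_lt_div_iff₀ (by positivity) (by positivity)]
    nlinarith [heNR, hL0]
  have hbudget : (A1.card : ℝ) * θ₁ + (B1.card : ℝ) * θ₂ < (crossCount G A1 B1 : ℝ) := by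
    linarith
  -- trimming
  obtain ⟨A', B', hA'sub, hB'sub, hpos, hdA', hdB'⟩ :=
    trim G θ₁ θ₂ hθ₁0 hθ₂0 (A1.card + B1.card) A1 B1 le_rfl hbudget
  -- witnesses for D bounds
  obtain ⟨x0, hx0, y0, hy0, hxy0⟩ := crossCount_pos G hpos
  have hdd1 : d / 4 ≤ D₁ := by
    have := hdeg_cls i S hSW x0 (hA'sub hx0)
    linarith [this.1, this.2.1]
  have hdd2 : d / 4 ≤ D₂ := by
    have := hdeg_cls j B0 hB0W y0 (hB'sub hy0)
    linarith [this.1, this.2.1]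
  -- the bipartite subgraph
  let G' : SimpleGraph V :=
    { Adj := fun u v => G.Adj u v ∧ ((u ∈ A' ∧ v ∈ B') ∨ (v ∈ A' ∧ u ∈ B'))
      symm := by
        constructor
        rintro u v ⟨ha, h2⟩
        exact ⟨ha.symm, h2.symm⟩
      loopless := ⟨fun v h => G.loopless.irrefl v h.1⟩ }
  have hG'le : G' ≤ G := fun u v h => h.1
  have hG'adj : G'.Adj x0 y0 := ⟨hxy0, Or.inl ⟨hx0, hy0⟩⟩
  have hAB'disj : Disjoint A' B' := by
    apply Finset.disjoint_of_subset_left (hA'sub.trans (Finset.filter_subset _ _))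
    apply Finset.disjoint_of_subset_right (hB'sub.trans (Finset.filter_subset _ _))
    exact Finset.disjoint_sdiff
  refine ⟨D₁, D₂, hdd1, hdd2, G', (A' : Set V), (B' : Set V), hG'le, ?_, ?_, ?_, ?_, ?_⟩
  · intro hbot
    rw [hbot] at hG'adj
    exact hG'adj
  · exact Finset.disjoint_coe.mpr hAB'disj
  · intro u v h
    exact h.2.imp (fun hp => ⟨hp.1, hp.2⟩) (fun hp => ⟨hp.2, hp.1⟩)
  · intro x hx
    have hx' : x ∈ A' := hx
    constructor
    · have hsub : ((G.neighborFinset x ∩ B' : Finset V) : Set V) ⊆ G'.neighborSet x := by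
        intro y hy
        simp only [Finset.coe_inter, Set.mem_inter_iff, Finset.mem_coe,
          SimpleGraph.mem_neighborFinset] at hy
        exact ⟨hy.1, Or.inl ⟨hx', hy.2⟩⟩
      have hcard : ((G.neighborFinset x ∩ B').card : ℝ) ≤ ((G'.neighborSet x).ncard : ℝ) := by
        have h := Set.ncard_le_ncard hsub (Set.toFinite _)
        rw [Set.ncard_coe_finset] at h
        exact_mod_cast h
      exact le_trans (hdA' x hx') hcard
    · have hns : ((G.neighborSet x).ncard : ℝ) = (G.degree x : ℝ) := by
        congr 1
        rw [Set.ncard_eq_toFinset_card', Set.toFinset_card]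
        exact G.card_neighborSet_eq_degree x
      rw [hns]
      exact (hdeg_cls i S hSW x (hA'sub hx')).2.1
  · intro y hy
    have hy' : y ∈ B' := hy
    constructor
    · have hsub : ((G.neighborFinset y ∩ A' : Finset V) : Set V) ⊆ G'.neighborSet y := by
        intro x hxm
        simp only [Finset.coe_inter, Set.mem_inter_iff, Finset.mem_coe,
          SimpleGraph.mem_neighborFinset] at hxm
        exact ⟨hxm.1, Or.inr ⟨hxm.2, hy'⟩⟩
      have hcard : ((G.neighborFinset y ∩ A').card : ℝ) ≤ ((G'.neighborSet y).ncard : ℝ) := by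
        have h := Set.ncard_le_ncard hsub (Set.toFinite _)
        rw [Set.ncard_coe_finset] at h
        exact_mod_cast h
      exact le_trans (hdB' y hy') hcard
    · have hns : ((G.neighborSet y).ncard : ℝ) = (G.degree y : ℝ) := by
        congr 1
        rw [Set.ncard_eq_toFinset_card', Set.toFinset_card]
        exact G.card_neighborSet_eq_degree y
      rw [hns]
      exact (hdeg_cls j B0 hB0W y (hB'sub hy')).2.1
end

section
/- Let G be a bipartite graph with parts X and Y such that every vertex x ∈ X has degree at least s and every vertex y ∈ Y has degree at least t. Then for every positive integer k, hom(C_{2k}, G) ≥ s^k · t^k. -/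
open Real

section Aux

open SimpleGraph Finset Matrix

private lemma walk_ext' {V : Type*} {G : SimpleGraph V} {u v : V} (p : G.Walk u v) :
    ∀ (q : G.Walk u v), p.length = q.length → (∀ i, p.getVert i = q.getVert i) → p = q := by
  induction p with
  | nil =>
    intro q hl _
    have h0 : q.length = 0 := by simpa using hl.symm
    exact (SimpleGraph.Walk.nil_iff_eq_nil.mp (SimpleGraph.Walk.length_eq_zero_iff.mp h0)).symm
  | @cons _ b _ h p' ih =>
    intro q hl hg
    cases q with
    | nil => simp at hl
    | @cons _ b2 _ h2 q' =>
      have hb : b = b2 := by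
        have := hg 1
        simpa [SimpleGraph.Walk.getVert_cons_succ, SimpleGraph.Walk.getVert_zero] using this
      subst hb
      have hp : p' = q' := ih q' (by simpa using hl)
        (fun i => by simpa [SimpleGraph.Walk.getVert_cons_succ] using hg (i + 1))
      rw [hp]

private lemma trace_le_homCount' {V : Type*} [Fintype V] [DecidableEq V] (G : SimpleGraph V)
    [DecidableRel G.Adj]
    (m : ℕ) (hm : 2 ≤ m) :
    (∑ u : V, (G.adjMatrix ℕ ^ m) u u) ≤ Paper.homCount G m := by
  classical
  haveI : NeZero m := ⟨by omega⟩
  haveI : Fact (1 < m) := ⟨by omega⟩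
  set T := {x : ZMod m → V // ∀ i, G.Adj (x i) (x (i + 1))} with hT
  have hval : ∀ i : ZMod m, (i + 1).val = (i.val + 1) % m := by
    intro i
    rw [ZMod.val_add, ZMod.val_one]
  let Φ : (Σ u : V, {p : G.Walk u u | p.length = m}) → T := fun a =>
    ⟨fun i => a.2.1.getVert i.val, by
      intro i
      obtain ⟨u, p, hp⟩ := a
      have hp' : p.length = m := hp
      have hiv : i.val < m := ZMod.val_lt i
      have hadj : G.Adj (p.getVert i.val) (p.getVert (i.val + 1)) :=
        p.adj_getVert_succ (by omega)
      rcases lt_or_eq_of_le (Nat.succ_le_of_lt hiv) with hlt | heq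
      · have : (i + 1).val = i.val + 1 := by rw [hval i, Nat.mod_eq_of_lt hlt]
        simpa [this] using hadj
      · have heq' : i.val + 1 = m := heq
        have h1 : (i + 1).val = 0 := by rw [hval i, heq', Nat.mod_self]
        have h2 : p.getVert (i.val + 1) = u := by
          rw [heq', ← hp', SimpleGraph.Walk.getVert_length]
        have h3 : p.getVert (i + 1).val = u := by
          rw [h1, SimpleGraph.Walk.getVert_zero]
        simp only [h3]
        rw [h2] at hadj; exact hadj⟩
  have hΦ : Function.Injective Φ := by
    rintro ⟨u, p, hp⟩ ⟨u2, p2, hp2⟩ heq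
    have hv : ∀ i : ZMod m, p.getVert i.val = p2.getVert i.val :=
      fun i => congrFun (Subtype.ext_iff.mp heq) i
    have hpm : (p.length = m) := hp
    have hpm2 : (p2.length = m) := hp2
    have hu : u = u2 := by
      have := hv 0
      simpa [ZMod.val_zero] using this
    subst hu
    have : p = p2 := by
      apply walk_ext'
      · rw [hpm, hpm2]
      · intro i
        rcases lt_or_ge i m with hi | hi
        · have := hv (i : ZMod m)
          rwa [ZMod.val_natCast, Nat.mod_eq_of_lt hi] at this
        · rw [SimpleGraph.Walk.getVert_of_length_le p (by omega),
            SimpleGraph.Walk.getVert_of_length_le p2 (by omega)]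
    subst this
    rfl
  calc (∑ u : V, (G.adjMatrix ℕ ^ m) u u)
      = ∑ u : V, Fintype.card {p : G.Walk u u | p.length = m} := by
        refine Finset.sum_congr rfl fun u _ => ?_
        rw [SimpleGraph.adjMatrix_pow_apply_eq_card_walk, Nat.cast_id]
    _ = Fintype.card (Σ u : V, {p : G.Walk u u | p.length = m}) := by
        rw [Fintype.card_sigma]
    _ = Nat.card (Σ u : V, {p : G.Walk u u | p.length = m}) :=
        (Nat.card_eq_fintype_card).symm
    _ ≤ Nat.card T := Nat.card_le_card_of_injective Φ hΦ
    _ = Paper.homCount G m := rfl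

private lemma trace_pow_lower' {V : Type*} [Fintype V] [DecidableEq V] (G : SimpleGraph V)
    [DecidableRel G.Adj] (S : Finset V) (hS : S.Nonempty)
    (hnbr : ∀ ⦃u v⦄, G.Adj u v → v ∈ S)
    (c : ℕ) (hc : 1 ≤ c)
    (hbase : c * S.card ≤ ∑ v : V, G.degree v ^ 2) (k : ℕ) :
    ((c : ℝ)) ^ k ≤ ∑ u : V, ((G.adjMatrix ℝ) ^ (k + k)) u u := by
  classical
  set A := G.adjMatrix ℝ with hA
  set f : V → ℝ := fun v => if v ∈ S then 1 else 0 with hf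
  set μ : ℕ → ℝ := fun j => f ⬝ᵥ ((A ^ j) *ᵥ f) with hμ
  have hAT : ∀ j : ℕ, (A ^ j)ᵀ = A ^ j := fun j => by
    rw [Matrix.transpose_pow, hA, SimpleGraph.transpose_adjMatrix]
  have hdot : ∀ a b : ℕ, ((A ^ a) *ᵥ f) ⬝ᵥ ((A ^ b) *ᵥ f) = μ (a + b) := by
    intro a b
    rw [Matrix.dotProduct_mulVec, ← hAT b, Matrix.vecMul_transpose,
      Matrix.mulVec_mulVec, ← pow_add, dotProduct_comm, hμ, add_comm b a]
  have hμ_sum : ∀ j : ℕ, μ (j + j) = ∑ v : V, ((A ^ j *ᵥ f) v) ^ 2 := by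
    intro j
    rw [← hdot j j]
    simp [dotProduct, sq]
  have hμnn : ∀ j : ℕ, 0 ≤ μ (j + j) := fun j => by
    rw [hμ_sum j]; positivity
  have hμ0 : μ 0 = S.card := by
    simp only [hμ, pow_zero, Matrix.one_mulVec, dotProduct, hf]
    simp [ite_and, Finset.sum_ite_mem, mul_ite, mul_one, mul_zero]
  have hμ0pos : 0 < μ 0 := by
    rw [hμ0]
    exact_mod_cast Finset.card_pos.mpr hS
  have hAf : ∀ v : V, (A *ᵥ f) v = (G.degree v : ℝ) := by
    intro v
    rw [hA, SimpleGraph.adjMatrix_mulVec_apply]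
    have h1 : ∀ u ∈ G.neighborFinset v, f u = 1 := fun u hu => by
      have hadj : G.Adj v u := by simpa using hu
      simp [hf, hnbr hadj]
    rw [Finset.sum_congr rfl h1, Finset.sum_const, nsmul_eq_mul, mul_one,
      SimpleGraph.card_neighborFinset_eq_degree]
  have hbase' : (c : ℝ) * μ 0 ≤ μ 2 := by
    have h2 : μ 2 = ∑ v : V, ((G.degree v : ℝ)) ^ 2 := by
      have := hμ_sum 1
      simp only [pow_one] at this
      rw [show (2 : ℕ) = 1 + 1 from rfl, this]
      exact Finset.sum_congr rfl fun v _ => by rw [hAf]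
    rw [h2, hμ0]
    exact_mod_cast (by exact_mod_cast Nat.cast_le.mpr hbase :
      ((c * S.card : ℕ) : ℝ) ≤ ((∑ v : V, G.degree v ^ 2 : ℕ) : ℝ))
  have hCS : ∀ j : ℕ, μ (j + 1 + (j + 1)) ^ 2 ≤ μ (j + j) * μ (j + 2 + (j + 2)) := by
    intro j
    have hcs := Finset.sum_mul_sq_le_sq_mul_sq Finset.univ
      (fun v => ((A ^ (j + 2)) *ᵥ f) v) (fun v => ((A ^ j) *ᵥ f) v)
    have h1 : ∑ v : V, ((A ^ (j + 2)) *ᵥ f) v * ((A ^ j) *ᵥ f) v = μ (j + 1 + (j + 1)) := by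
      rw [show ∑ v : V, ((A ^ (j + 2)) *ᵥ f) v * ((A ^ j) *ᵥ f) v
          = ((A ^ (j + 2)) *ᵥ f) ⬝ᵥ ((A ^ j) *ᵥ f) from rfl, hdot]
      congr 1; omega
    rw [h1] at hcs
    calc μ (j + 1 + (j + 1)) ^ 2 ≤ (∑ v : V, ((A ^ (j + 2)) *ᵥ f) v ^ 2)
        * (∑ v : V, ((A ^ j) *ᵥ f) v ^ 2) := hcs
      _ = μ (j + j) * μ (j + 2 + (j + 2)) := by
        rw [← hμ_sum, ← hμ_sum]; ring
  have hiter : ∀ j : ℕ,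
      (c : ℝ) ^ j * μ 0 ≤ μ (j + j) ∧ (c : ℝ) * μ (j + j) ≤ μ (j + 1 + (j + 1)) := by
    intro j
    induction j with
    | zero => exact ⟨by simp, by simpa using hbase'⟩
    | succ j ih =>
      obtain ⟨ih1, ih2⟩ := ih
      have hpos : 0 < μ (j + j) :=
        lt_of_lt_of_le (by positivity) ih1
      have h1 : (c : ℝ) ^ (j + 1) * μ 0 ≤ μ (j + 1 + (j + 1)) := by
        calc (c : ℝ) ^ (j + 1) * μ 0 = (c : ℝ) * ((c : ℝ) ^ j * μ 0) := by ring
          _ ≤ (c : ℝ) * μ (j + j) := by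
            have : (0:ℝ) ≤ (c:ℝ) := by positivity
            nlinarith
          _ ≤ μ (j + 1 + (j + 1)) := ih2
      refine ⟨h1, ?_⟩
      have hcs := hCS j
      have hnn1 := hμnn (j + 1)
      have hnn2 := hμnn (j + 2)
      nlinarith [mul_le_mul_of_nonneg_right ih2 hnn1, hpos, hμnn (j + j)]
  set P := A ^ (k + k) with hP
  have hPuv : ∀ u v : V, P u v = ∑ w : V, (A ^ k) u w * (A ^ k) v w := by
    intro u v
    rw [hP, pow_add, Matrix.mul_apply]
    exact Finset.sum_congr rfl fun w _ => by
      rw [show (A ^ k) w v = (A ^ k)ᵀ v w from rfl, hAT k]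
  have hdiag : ∀ u : V, 0 ≤ P u u := fun u => by
    rw [hPuv]; exact Finset.sum_nonneg fun w _ => by nlinarith [sq_nonneg ((A ^ k) u w)]
  have hptw : ∀ u v : V, P u v ≤ (P u u + P v v) / 2 := by
    intro u v
    rw [hPuv u v, hPuv u u, hPuv v v, ← Finset.sum_add_distrib, Finset.sum_div]
    exact Finset.sum_le_sum fun w _ => by nlinarith [sq_nonneg ((A ^ k) u w - (A ^ k) v w)]
  have hind : ∀ h : V → ℝ, ∑ u : V, f u * h u = ∑ u ∈ S, h u := by
    intro h
    calc ∑ u : V, f u * h u = ∑ u : V, if u ∈ S then h u else 0 :=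
          Finset.sum_congr rfl fun u _ => by by_cases hu : u ∈ S <;> simp [hf, hu]
      _ = ∑ u ∈ S, h u := by rw [Finset.sum_ite_mem, Finset.univ_inter]
  have hupper : μ (k + k) ≤ μ 0 * ∑ u : V, P u u := by
    have exp1 : μ (k + k) = ∑ u ∈ S, ∑ v ∈ S, P u v := by
      rw [show μ (k + k) = ∑ u : V, f u * ((P *ᵥ f) u) from rfl, hind]
      refine Finset.sum_congr rfl fun u _ => ?_
      rw [show (P *ᵥ f) u = ∑ v : V, P u v * f v from rfl,
        Finset.sum_congr rfl (fun v _ => mul_comm (P u v) (f v)), hind (fun v => P u v)]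
    calc μ (k + k) = ∑ u ∈ S, ∑ v ∈ S, P u v := exp1
      _ ≤ ∑ u ∈ S, ∑ v ∈ S, (P u u + P v v) / 2 :=
          Finset.sum_le_sum fun u _ => Finset.sum_le_sum fun v _ => hptw u v
      _ = (S.card : ℝ) * ∑ u ∈ S, P u u := by
          have inner : ∀ u : V, ∑ v ∈ S, (P u u + P v v) / 2
              = ((S.card : ℝ) * P u u + ∑ v ∈ S, P v v) / 2 := by
            intro u
            rw [← Finset.sum_div, Finset.sum_add_distrib, Finset.sum_const, nsmul_eq_mul]
          rw [Finset.sum_congr rfl fun u _ => inner u, ← Finset.sum_div, Finset.sum_add_distrib,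
            ← Finset.mul_sum, Finset.sum_const, nsmul_eq_mul]
          ring
      _ ≤ (S.card : ℝ) * ∑ u : V, P u u := by
          have hsub := Finset.sum_le_sum_of_subset_of_nonneg (Finset.subset_univ S)
            (fun u _ _ => hdiag u)
          have hc0 : (0 : ℝ) ≤ (S.card : ℝ) := by positivity
          exact mul_le_mul_of_nonneg_left hsub hc0
      _ = μ 0 * ∑ u : V, P u u := by rw [hμ0]
  have h1 : (c : ℝ) ^ k * μ 0 ≤ μ 0 * ∑ u : V, P u u := le_trans (hiter k).1 hupper
  have h2 : μ 0 * (c : ℝ) ^ k ≤ μ 0 * ∑ u : V, P u u := by linarith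
  exact le_of_mul_le_mul_left h2 hμ0pos

private lemma cast_pow_entry' {V : Type*} [Fintype V] [DecidableEq V] (G : SimpleGraph V)
    [DecidableRel G.Adj] (j : ℕ) (u v : V) :
    (((G.adjMatrix ℕ ^ j) u v : ℕ) : ℝ) = ((G.adjMatrix ℝ) ^ j) u v := by
  induction j generalizing u v with
  | zero => by_cases h : u = v <;> simp [Matrix.one_apply, h]
  | succ j ih =>
    rw [pow_succ, pow_succ, Matrix.mul_apply, Matrix.mul_apply, Nat.cast_sum]
    refine Finset.sum_congr rfl fun w _ => ?_
    rw [Nat.cast_mul, ih]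
    congr 1
    by_cases h : G.Adj w v <;> simp [SimpleGraph.adjMatrix_apply, h]

end Aux


/-- Lemma 2.4: `hom(C_{2k}, G) ≥ s^k t^k` for bipartite `G` with minimum degree
`s` on side `X` and `t` on side `Y`. -/
theorem statement_6 {V : Type*} [Fintype V] (G : SimpleGraph V) (X Y : Set V)
    (hX : X.Nonempty) (hY : Y.Nonempty)
    (hbip : ∀ u v, G.Adj u v → (u ∈ X ∧ v ∈ Y) ∨ (u ∈ Y ∧ v ∈ X))
    (s t : ℕ) (hs : ∀ x ∈ X, s ≤ (G.neighborSet x).ncard)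
    (ht : ∀ y ∈ Y, t ≤ (G.neighborSet y).ncard)
    (k : ℕ) (hk : 0 < k) :
    s ^ k * t ^ k ≤ Paper.homCount G (2 * k) := by
  classical
  rcases Nat.eq_zero_or_pos s with rfl | hs1
  · simp [zero_pow hk.ne']
  rcases Nat.eq_zero_or_pos t with rfl | ht1
  · simp [zero_pow hk.ne']
  haveI : DecidableRel G.Adj := Classical.decRel _
  have hdegncard : ∀ v : V, (G.neighborSet v).ncard = G.degree v := by
    intro v
    rw [← Nat.card_coe_set_eq, Nat.card_eq_fintype_card,
      SimpleGraph.card_neighborSet_eq_degree]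
  have hs' : ∀ x ∈ X, s ≤ G.degree x := fun x hx => hdegncard x ▸ hs x hx
  have ht' : ∀ y ∈ Y, t ≤ G.degree y := fun y hy => hdegncard y ▸ ht y hy
  set S : Finset V := Finset.univ.filter (fun v => v ∈ X ∨ v ∈ Y) with hSdef
  have hmemS : ∀ v : V, v ∈ S ↔ (v ∈ X ∨ v ∈ Y) := by
    intro v; simp [hSdef]
  have hnbr : ∀ ⦃u v : V⦄, G.Adj u v → v ∈ S := by
    intro u v h
    rw [hmemS]
    rcases hbip u v h with ⟨_, hv⟩ | ⟨_, hv⟩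
    exacts [Or.inr hv, Or.inl hv]
  have hS : S.Nonempty := by
    obtain ⟨x, hx⟩ := hX
    exact ⟨x, (hmemS x).mpr (Or.inl hx)⟩
  have hdeg1 : ∀ u ∈ S, 1 ≤ G.degree u := by
    intro u hu
    rcases (hmemS u).mp hu with hu' | hu'
    · exact le_trans hs1 (hs' u hu')
    · exact le_trans ht1 (ht' u hu')
  have hprod : ∀ ⦃u v : V⦄, G.Adj u v → s * t ≤ G.degree u * G.degree v := by
    intro u v h
    rcases hbip u v h with ⟨hu, hv⟩ | ⟨hu, hv⟩
    · exact Nat.mul_le_mul (hs' u hu) (ht' v hv)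
    · rw [mul_comm]
      exact Nat.mul_le_mul (ht' u hu) (hs' v hv)
  have per_u : ∀ u ∈ S, s * t ≤ ∑ v ∈ G.neighborFinset u, G.degree v := by
    intro u hu
    have hd : 1 ≤ G.degree u := hdeg1 u hu
    have h1 : (s * t) * G.degree u ≤ (∑ v ∈ G.neighborFinset u, G.degree v) * G.degree u := by
      calc (s * t) * G.degree u = ∑ _v ∈ G.neighborFinset u, s * t := by
            rw [Finset.sum_const, smul_eq_mul, SimpleGraph.card_neighborFinset_eq_degree,
              mul_comm]
        _ ≤ ∑ v ∈ G.neighborFinset u, G.degree v * G.degree u := by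
            refine Finset.sum_le_sum fun v hv => ?_
            have hadj : G.Adj u v := by simpa using hv
            calc s * t ≤ G.degree u * G.degree v := hprod hadj
              _ = G.degree v * G.degree u := mul_comm _ _
        _ = (∑ v ∈ G.neighborFinset u, G.degree v) * G.degree u := by rw [Finset.sum_mul]
    exact Nat.le_of_mul_le_mul_right h1 hd
  have swap : ∑ u : V, ∑ v ∈ G.neighborFinset u, G.degree v = ∑ v : V, G.degree v ^ 2 := by
    have e1 : ∀ u : V, ∑ v ∈ G.neighborFinset u, G.degree v
        = ∑ v : V, if G.Adj u v then G.degree v else 0 := by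
      intro u
      rw [SimpleGraph.neighborFinset_eq_filter, Finset.sum_filter]
    rw [Finset.sum_congr rfl fun u _ => e1 u, Finset.sum_comm]
    refine Finset.sum_congr rfl fun v _ => ?_
    rw [← Finset.sum_filter]
    have hfv : Finset.univ.filter (fun u => G.Adj u v) = G.neighborFinset v := by
      ext u
      simp [SimpleGraph.adj_comm]
    rw [hfv, Finset.sum_const, smul_eq_mul, SimpleGraph.card_neighborFinset_eq_degree, sq]
  have key1 : (s * t) * S.card ≤ ∑ v : V, G.degree v ^ 2 := by
    calc (s * t) * S.card = ∑ _u ∈ S, s * t := by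
          rw [Finset.sum_const, smul_eq_mul, mul_comm]
      _ ≤ ∑ u ∈ S, ∑ v ∈ G.neighborFinset u, G.degree v := Finset.sum_le_sum per_u
      _ ≤ ∑ u : V, ∑ v ∈ G.neighborFinset u, G.degree v :=
          Finset.sum_le_sum_of_subset (Finset.subset_univ S)
      _ = ∑ v : V, G.degree v ^ 2 := swap
  have hst1 : 1 ≤ s * t := Nat.one_le_iff_ne_zero.mpr (Nat.mul_ne_zero hs1.ne' ht1.ne')
  have main := trace_pow_lower' G S hS hnbr (s * t) hst1 key1 k
  have hcount := trace_le_homCount' G (2 * k) (by omega)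
  have hcast : ((∑ u : V, (G.adjMatrix ℕ ^ (2 * k)) u u : ℕ) : ℝ)
      = ∑ u : V, ((G.adjMatrix ℝ) ^ (k + k)) u u := by
    rw [Nat.cast_sum]
    refine Finset.sum_congr rfl fun u _ => ?_
    rw [show k + k = 2 * k by ring]
    exact cast_pow_entry' G (2 * k) u u
  have hfinal : (((s * t : ℕ)) : ℝ) ^ k ≤ ((Paper.homCount G (2 * k) : ℕ) : ℝ) := by
    refine le_trans main ?_
    rw [← hcast]
    exact_mod_cast Nat.cast_le.mpr hcount
  have hmain : (s * t) ^ k ≤ Paper.homCount G (2 * k) := by exact_mod_cast hfinal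
  calc s ^ k * t ^ k = (s * t) ^ k := (mul_pow s t k).symm
    _ ≤ Paper.homCount G (2 * k) := hmain
end

section
/- Let G be a graph on n vertices with at least one edge. Then G has a spanning subgraph G' with e(G') ≥ e(G)/2 such that, writing q for the number of copies of C_4 in G', every edge of G' belongs to at most (16·log n / e(G'))·q copies of C_4 in G'. -/
open Real

section Aux9

open Real

variable {V : Type*} [Fintype V]

private def cyc9 (H : SimpleGraph V) : Set (ZMod 4 → V) :=
  {x | Function.Injective x ∧ ∀ i, H.Adj (x i) (x (i + 1))}

private def cycE9 (H : SimpleGraph V) (e : Sym2 V) : Set (ZMod 4 → V) :=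
  {x | Function.Injective x ∧ (∀ i, H.Adj (x i) (x (i + 1))) ∧ ∃ i, s(x i, x (i + 1)) = e}

private lemma c4Count_eq9 (H : SimpleGraph V) : Paper.c4Count H = (cyc9 H).ncard / 8 := rfl

private lemma c4CountEdge_eq9 (H : SimpleGraph V) (e : Sym2 V) :
    Paper.c4CountEdge H e = (cycE9 H e).ncard / 8 := rfl

private lemma cycE9_subset (H : SimpleGraph V) (e : Sym2 V) : cycE9 H e ⊆ cyc9 H := by
  rintro x ⟨h1, h2, _⟩; exact ⟨h1, h2⟩

private lemma c4CountEdge_le9 (H : SimpleGraph V) (e : Sym2 V) :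
    Paper.c4CountEdge H e ≤ Paper.c4Count H := by
  rw [c4Count_eq9, c4CountEdge_eq9]
  exact Nat.div_le_div_right (Set.ncard_le_ncard (cycE9_subset H e) (Set.toFinite _))

private lemma cyc9_delete (H : SimpleGraph V) (e : Sym2 V) :
    cyc9 (H.deleteEdges {e}) = cyc9 H \ cycE9 H e := by
  ext x
  simp only [cyc9, cycE9, Set.mem_setOf_eq, Set.mem_diff, SimpleGraph.deleteEdges_adj,
    Set.mem_singleton_iff]
  constructor
  · rintro ⟨hi, ha⟩
    exact ⟨⟨hi, fun i => (ha i).1⟩, fun h => h.2.2.elim (fun i hie => (ha i).2 hie)⟩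
  · rintro ⟨⟨hi, ha⟩, hne⟩
    exact ⟨hi, fun i => ⟨ha i, fun hie => hne ⟨hi, ha, i, hie⟩⟩⟩

private lemma cyc9_card_le (H : SimpleGraph V) (n : ℕ) (hn : Fintype.card V = n) :
    (cyc9 H).ncard ≤ n ^ 4 := by
  calc (cyc9 H).ncard ≤ (Set.univ : Set (ZMod 4 → V)).ncard :=
        Set.ncard_le_ncard (Set.subset_univ _) (Set.toFinite _)
    _ = Fintype.card (ZMod 4 → V) := by
        rw [Set.ncard_univ, Nat.card_eq_fintype_card]
    _ = n ^ 4 := by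
        rw [Fintype.card_fun, hn, ZMod.card]

set_option maxHeartbeats 2000000 in
private lemma key9 {n : ℕ} (hn : Fintype.card V = n) (hn2 : 2 ≤ n) (G : SimpleGraph V)
    (hL : 16 * Real.logb 2 n < (G.edgeSet.ncard : ℝ)) :
    ∀ m : ℕ, ∀ H : SimpleGraph V, H ≤ G → H.edgeSet.ncard = m →
      ((G.edgeSet.ncard : ℝ) / 2 ≤ (m : ℝ)) →
      (((cyc9 H).ncard : ℝ) ≤ (n : ℝ) ^ 4 *
          (1 - 16 * Real.logb 2 n / (G.edgeSet.ncard : ℝ)) ^ (G.edgeSet.ncard - m) + 7) →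
      ∃ G' : SimpleGraph V, G' ≤ G ∧
        (G.edgeSet.ncard : ℝ) / 2 ≤ (G'.edgeSet.ncard : ℝ) ∧
        ∀ e ∈ G'.edgeSet, (Paper.c4CountEdge G' e : ℝ) ≤
          16 * Real.logb 2 n / (G'.edgeSet.ncard : ℝ) * (Paper.c4Count G' : ℝ) := by
  intro m
  induction m using Nat.strong_induction_on with
  | _ m ih =>
  intro H hHG hm hhalf hinv
  set m0 : ℕ := G.edgeSet.ncard with hm0
  set L : ℝ := 16 * Real.logb 2 n with hLdef
  set ρ : ℝ := 1 - L / m0 with hρdef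
  clear_value m0 L ρ
  have hlogb1 : (1 : ℝ) ≤ Real.logb 2 n := by
    have h2 : Real.logb 2 2 ≤ Real.logb 2 n :=
      Real.logb_le_logb_of_le one_lt_two (by norm_num) (by exact_mod_cast hn2)
    rwa [Real.logb_self_eq_one one_lt_two] at h2
  have hL16 : (16 : ℝ) ≤ L := by rw [hLdef]; nlinarith
  have hm0pos : (0 : ℝ) < (m0 : ℝ) := lt_trans (by linarith) hL
  have hm017 : (17 : ℝ) ≤ (m0 : ℝ) := by
    have h16 : (16 : ℝ) < (m0 : ℝ) := lt_of_le_of_lt hL16 hL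
    have : 16 < m0 := by exact_mod_cast h16
    exact_mod_cast this
  have hρ0 : 0 ≤ ρ := by
    rw [hρdef, sub_nonneg, div_le_one hm0pos]; exact le_of_lt hL
  have hmle : m ≤ m0 := by
    rw [← hm, hm0]
    exact Set.ncard_le_ncard (SimpleGraph.edgeSet_mono hHG) (Set.toFinite _)
  by_cases hgood : ∀ e ∈ H.edgeSet, (Paper.c4CountEdge H e : ℝ) ≤
      L / (H.edgeSet.ncard : ℝ) * (Paper.c4Count H : ℝ)
  · exact ⟨H, hHG, by rw [hm]; exact hhalf, hgood⟩
  · push_neg at hgood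
    obtain ⟨e, he, hbad⟩ := hgood
    rw [hm, c4Count_eq9, c4CountEdge_eq9] at hbad
    set N : ℕ := (cyc9 H).ncard with hN
    set Ne : ℕ := (cycE9 H e).ncard with hNe
    clear_value N Ne
    have hmpos : 0 < m := by
      rw [← hm]
      exact (Set.ncard_pos (Set.toFinite _)).mpr ⟨e, he⟩
    have hmposR : (0 : ℝ) < (m : ℝ) := by exact_mod_cast hmpos
    have hcoeff0 : (0 : ℝ) ≤ L / m := by
      apply div_nonneg (by linarith) (le_of_lt hmposR)
    have hNeN : Ne ≤ N := by
      rw [hN, hNe]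
      exact Set.ncard_le_ncard (cycE9_subset H e) (Set.toFinite _)
    have hNe8 : 8 ≤ Ne := by
      have h2 : 1 ≤ Ne / 8 := by
        rcases Nat.eq_zero_or_pos (Ne / 8) with h0 | h1
        · exfalso
          rw [h0] at hbad
          have hge : (0 : ℝ) ≤ L / m * ((N / 8 : ℕ) : ℝ) :=
            mul_nonneg hcoeff0 (Nat.cast_nonneg _)
          simp at hbad
          linarith
        · exact h1
      exact (Nat.one_le_div_iff (by norm_num)).mp h2
    have hN8 : 8 ≤ N := le_trans hNe8 hNeN
    have ha : ((Ne / 8 : ℕ) : ℝ) * 8 ≤ (Ne : ℝ) := by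
      exact_mod_cast Nat.div_mul_le_self Ne 8
    have hb : (N : ℝ) - 7 ≤ ((N / 8 : ℕ) : ℝ) * 8 := by
      have hmod : N % 8 ≤ 7 := by omega
      have hdm : (N : ℝ) = 8 * ((N / 8 : ℕ) : ℝ) + ((N % 8 : ℕ) : ℝ) := by
        exact_mod_cast (Nat.div_add_mod N 8).symm
      have hmodR : ((N % 8 : ℕ) : ℝ) ≤ 7 := by exact_mod_cast hmod
      linarith
    have hkey : (L / m) * ((N : ℝ) - 7) < (Ne : ℝ) := by
      have h1 : (L / m) * ((N : ℝ) - 7) ≤ (L / m) * (((N / 8 : ℕ) : ℝ) * 8) :=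
        mul_le_mul_of_nonneg_left hb hcoeff0
      have h2 : (L / m) * (((N / 8 : ℕ) : ℝ) * 8) < ((Ne / 8 : ℕ) : ℝ) * 8 := by
        nlinarith
      linarith
    set H' := H.deleteEdges {e} with hH'
    have hH'le : H' ≤ H := SimpleGraph.deleteEdges_le {e}
    have hH'G : H' ≤ G := le_trans hH'le hHG
    have hH'edges : H'.edgeSet.ncard = m - 1 := by
      rw [hH', SimpleGraph.edgeSet_deleteEdges, ← hm]
      exact Set.ncard_diff_singleton_of_mem he
    have hN' : ((cyc9 H').ncard : ℝ) = (N : ℝ) - (Ne : ℝ) := by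
      rw [hH', cyc9_delete, Set.ncard_diff (cycE9_subset H e) (Set.toFinite _),
        ← hN, ← hNe, Nat.cast_sub hNeN]
    clear_value H'
    by_cases hrec : (m0 : ℝ) / 2 ≤ (m : ℝ) - 1
    · have hstep : ((cyc9 H').ncard : ℝ) ≤
          (n : ℝ) ^ 4 * ρ ^ (m0 - (m - 1)) + 7 := by
        have hexp : m0 - (m - 1) = (m0 - m) + 1 := by omega
        have hps : ρ ^ (m0 - (m - 1)) = ρ ^ (m0 - m) * ρ := by rw [hexp, pow_succ]
        rw [hps]
        have hinv7 : (N : ℝ) - 7 ≤ (n : ℝ) ^ 4 * ρ ^ (m0 - m) := by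
          linarith
        have hN7 : (0 : ℝ) ≤ (N : ℝ) - 7 := by
          have h8 : (8 : ℝ) ≤ (N : ℝ) := by exact_mod_cast hN8
          linarith
        have hρm : 1 - L / m ≤ ρ := by
          rw [hρdef]
          have hdd : L / m0 ≤ L / m := by
            apply div_le_div_of_nonneg_left (by linarith) hmposR
            exact_mod_cast hmle
          linarith
        have hmain : (N : ℝ) - (Ne : ℝ) ≤ ((N : ℝ) - 7) * (1 - L / m) + 7 := by
          nlinarith
        rcases le_or_gt 0 (1 - L / m) with hc | hc
        · have hmm : ((N : ℝ) - 7) * (1 - L / m) ≤ ((n : ℝ) ^ 4 * ρ ^ (m0 - m)) * ρ :=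
            mul_le_mul hinv7 hρm hc (by positivity)
          rw [hN']; linarith
        · have hmm : ((N : ℝ) - 7) * (1 - L / m) ≤ 0 :=
            mul_nonpos_of_nonneg_of_nonpos hN7 (le_of_lt hc)
          have hpos : (0 : ℝ) ≤ (n : ℝ) ^ 4 * ρ ^ (m0 - m) * ρ := by positivity
          rw [hN']; linarith
      have hm1 : ((m - 1 : ℕ) : ℝ) = (m : ℝ) - 1 := by
        rw [Nat.cast_sub hmpos, Nat.cast_one]
      exact ih (m - 1) (by omega) H' hH'G hH'edges (by rw [hm1]; exact hrec) hstep
    · exfalso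
      push_neg at hrec
      set d : ℕ := m0 - m with hd
      clear_value d
      have hdR : (m0 : ℝ) / 2 - 1 < (d : ℝ) := by
        have hdc : ((d : ℕ) : ℝ) = (m0 : ℝ) - (m : ℝ) := by
          rw [hd, Nat.cast_sub hmle]
        rw [hdc]; linarith
      have hρexp : ρ ≤ Real.exp (-(L / m0)) := by
        have := Real.add_one_le_exp (-(L / m0))
        rw [hρdef]; linarith
      have hρd : ρ ^ d ≤ Real.exp (-(L / m0)) ^ d := pow_le_pow_left₀ hρ0 hρexp d
      have hexp2 : Real.exp (-(L / m0)) ^ d = Real.exp (-(L / m0 * d)) := by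
        rw [← Real.exp_nat_mul]; ring_nf
      have hnpos : (0 : ℝ) < (n : ℝ) := by positivity
      have hlogn : 0 < Real.log n := Real.log_pos (by exact_mod_cast hn2)
      have hlogblog : Real.log n ≤ Real.logb 2 n := by
        rw [Real.logb, le_div_iff₀ (Real.log_pos one_lt_two)]
        nlinarith [Real.log_two_lt_d9, Real.log_nonneg
          (show (1 : ℝ) ≤ (n : ℝ) by exact_mod_cast le_trans (by norm_num) hn2),
          Real.log_pos one_lt_two]
      have hLlog : 16 * Real.log n ≤ L := by rw [hLdef]; linarith
      have hdlarge : (15 / 34 : ℝ) * (m0 : ℝ) ≤ (d : ℝ) := by nlinarith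
      have hfrac : 4 * Real.log n < L / m0 * d := by
        have h1 : L / m0 * ((15 / 34 : ℝ) * m0) ≤ L / m0 * d :=
          mul_le_mul_of_nonneg_left hdlarge (div_nonneg (by linarith) (le_of_lt hm0pos))
        have h2 : L / m0 * ((15 / 34 : ℝ) * m0) = (15 / 34) * L := by
          field_simp
        nlinarith
      have hn4 : ((n : ℝ)) ^ 4 = Real.exp (4 * Real.log n) := by
        rw [show (4 : ℝ) * Real.log n = ((4 : ℕ) : ℝ) * Real.log n by norm_num,
          Real.exp_nat_mul, Real.exp_log hnpos]
      have h1le : (1 : ℝ) ≤ (n : ℝ) ^ 4 * ρ ^ d := by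
        have h8 : (8 : ℝ) ≤ (N : ℝ) := by exact_mod_cast hN8
        linarith
      have hfinal : (n : ℝ) ^ 4 * ρ ^ d < 1 := by
        calc (n : ℝ) ^ 4 * ρ ^ d ≤ (n : ℝ) ^ 4 * Real.exp (-(L / m0 * d)) := by
              rw [← hexp2]
              exact mul_le_mul_of_nonneg_left hρd (by positivity)
          _ = Real.exp (4 * Real.log n - L / m0 * d) := by
              rw [hn4, ← Real.exp_add]; ring_nf
          _ < 1 := by
              rw [← Real.exp_zero]
              exact Real.exp_lt_exp.mpr (by linarith)
      linarith

end Aux9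
/-- Lemma 2.9: a spanning subgraph with at least half the edges in which no edge
lies in a large proportion of the `4`-cycles. -/
theorem statement_9 {V : Type*} [Fintype V] (n : ℕ) (hn : Fintype.card V = n)
    (G : SimpleGraph V) (hne : G.edgeSet.Nonempty) :
    ∃ G' : SimpleGraph V, G' ≤ G ∧
      (G.edgeSet.ncard : ℝ) / 2 ≤ (G'.edgeSet.ncard : ℝ) ∧
      ∀ e ∈ G'.edgeSet, (Paper.c4CountEdge G' e : ℝ) ≤
        16 * Real.logb 2 n / (G'.edgeSet.ncard : ℝ) * (Paper.c4Count G' : ℝ) := by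
  classical
  obtain ⟨e, he⟩ := hne
  have hn2 : 2 ≤ n := by
    induction e using Sym2.ind with
    | _ u v =>
      rw [SimpleGraph.mem_edgeSet] at he
      have huv : u ≠ v := G.ne_of_adj he
      have : Nontrivial V := ⟨⟨u, v, huv⟩⟩
      rw [← hn]
      exact Fintype.one_lt_card
  have hm0pos : 0 < G.edgeSet.ncard := (Set.ncard_pos (Set.toFinite _)).mpr ⟨e, he⟩
  have hm0posR : (0 : ℝ) < (G.edgeSet.ncard : ℝ) := by exact_mod_cast hm0pos
  rcases le_or_gt ((G.edgeSet.ncard : ℝ)) (16 * Real.logb 2 n) with hcase | hcase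
  · refine ⟨G, le_rfl, by linarith, ?_⟩
    intro e' _
    have h1 : (Paper.c4CountEdge G e' : ℝ) ≤ (Paper.c4Count G : ℝ) := by
      exact_mod_cast c4CountEdge_le9 G e'
    have hge1 : (1 : ℝ) ≤ 16 * Real.logb 2 n / (G.edgeSet.ncard : ℝ) := by
      rw [le_div_iff₀ hm0posR]; linarith
    nlinarith [show (0 : ℝ) ≤ (Paper.c4Count G : ℝ) from Nat.cast_nonneg _]
  · refine key9 hn hn2 G hcase G.edgeSet.ncard G le_rfl rfl (by linarith) ?_
    rw [Nat.sub_self, pow_zero, mul_one]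
    have h1 := cyc9_card_le G n hn
    have h2 : ((cyc9 G).ncard : ℝ) ≤ ((n ^ 4 : ℕ) : ℝ) := by exact_mod_cast h1
    push_cast at h2
    linarith
end

section
/- Let G be a graph, let k be a positive integer and let β > 0. If C₀ ⊆ V(G)^{8k} is non-empty and β-good, then C₀ has a non-empty subset which is β-nice. -/
open Real

set_option linter.unusedSectionVars false


namespace S12Aux

open Finset

variable {V : Type*} [Fintype V] {k : ℕ} [NeZero (8 * k)]

def clsK (C : Set (ZMod (8 * k) → V)) (i : ZMod (8 * k))
    (w : {j : ZMod (8 * k) // j ≠ i + 1 ∧ j ≠ i + 2} → V) : Set (ZMod (8 * k) → V) :=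
  {x ∈ C | ∀ j : {j : ZMod (8 * k) // j ≠ i + 1 ∧ j ≠ i + 2}, x j.1 = w j}

def keys (C₀ : Set (ZMod (8 * k) → V)) (i : ZMod (8 * k)) :
    Set ({j : ZMod (8 * k) // j ≠ i + 1 ∧ j ≠ i + 2} → V) :=
  {w | ∃ x ∈ C₀, ∀ j : {j : ZMod (8 * k) // j ≠ i + 1 ∧ j ≠ i + 2}, x j.1 = w j}

noncomputable def Phi (C₀ C : Set (ZMod (8 * k) → V)) (M : ℝ) : ℝ :=
  ∑ i : ZMod (8 * k), ∑ w ∈ (Set.toFinite (keys C₀ i)).toFinset,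
    min (((clsK C i w).ncard : ℝ)) M

lemma clsK_subset (C : Set (ZMod (8 * k) → V)) (i w) : clsK C i w ⊆ C := fun _ hx => hx.1

lemma clsK_mono {C C' : Set (ZMod (8 * k) → V)} (h : C' ⊆ C) (i w) :
    clsK C' i w ⊆ clsK C i w := fun x hx => ⟨h hx.1, hx.2⟩

lemma clsK_diff (C A : Set (ZMod (8 * k) → V)) (i w) :
    clsK (C \ A) i w = clsK C i w \ A := by
  ext x
  simp only [clsK, Set.mem_setOf_eq, Set.mem_diff, Set.mem_setOf_eq]
  tauto

lemma clsK_diff_ne {C A : Set (ZMod (8 * k) → V)} {i w w'} (hA : A ⊆ clsK C i w)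
    (hne : w' ≠ w) : clsK (C \ A) i w' = clsK C i w' := by
  rw [clsK_diff]
  ext x
  simp only [Set.mem_diff, and_iff_left_iff_imp]
  intro hx hxA
  exact hne (funext fun j => (hx.2 j).symm.trans ((hA hxA).2 j))

lemma Phi_nonneg (C₀ C : Set (ZMod (8 * k) → V)) {M : ℝ} (hM : 0 ≤ M) :
    0 ≤ Phi C₀ C M := by
  refine Finset.sum_nonneg fun i _ => Finset.sum_nonneg fun w _ => ?_
  exact le_min (by positivity) hM

lemma Phi_drop {C₀ C A : Set (ZMod (8 * k) → V)} {M : ℝ} {i : ZMod (8 * k)}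
    {w : {j : ZMod (8 * k) // j ≠ i + 1 ∧ j ≠ i + 2} → V}
    (hA : A ⊆ clsK C i w) (hw : w ∈ keys C₀ i)
    (hc : ((clsK C i w).ncard : ℝ) < M) :
    Phi C₀ (C \ A) M + (A.ncard : ℝ) ≤ Phi C₀ C M := by
  have hterm : ∀ (i' : ZMod (8 * k)) w',
      min (((clsK (C \ A) i' w').ncard : ℝ)) M ≤ min (((clsK C i' w').ncard : ℝ)) M := by
    intro i' w'
    exact min_le_min (Nat.cast_le.2 (Set.ncard_le_ncard
      (clsK_mono Set.diff_subset i' w') (Set.toFinite _))) le_rfl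
  have hAc : A.ncard ≤ (clsK C i w).ncard := Set.ncard_le_ncard hA (Set.toFinite _)
  -- the special term
  have hspecial : min (((clsK (C \ A) i w).ncard : ℝ)) M + (A.ncard : ℝ)
      = min (((clsK C i w).ncard : ℝ)) M := by
    rw [clsK_diff, Set.ncard_diff hA (Set.toFinite _)]
    rw [min_eq_left (le_of_lt hc), min_eq_left (by
      rw [Nat.cast_sub hAc]
      have : (0:ℝ) ≤ (A.ncard : ℝ) := Nat.cast_nonneg _
      linarith)]
    rw [Nat.cast_sub hAc]; ring
  -- inner sums
  set K := fun i' : ZMod (8 * k) => (Set.toFinite (keys C₀ i')).toFinset with hK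
  have hinner_le : ∀ i', ∑ w' ∈ K i', min (((clsK (C \ A) i' w').ncard : ℝ)) M
      ≤ ∑ w' ∈ K i', min (((clsK C i' w').ncard : ℝ)) M :=
    fun i' => Finset.sum_le_sum fun w' _ => hterm i' w'
  have hwK : w ∈ K i := by simp [hK, Set.Finite.mem_toFinset]; exact hw
  have hinner_i : ∑ w' ∈ K i, min (((clsK (C \ A) i w').ncard : ℝ)) M + (A.ncard : ℝ)
      ≤ ∑ w' ∈ K i, min (((clsK C i w').ncard : ℝ)) M := by
    have h1 : (A.ncard : ℝ) ≤ ∑ w' ∈ K i,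
        (min (((clsK C i w').ncard : ℝ)) M - min (((clsK (C \ A) i w').ncard : ℝ)) M) := by
      refine Finset.single_le_sum (f := fun w' =>
        min (((clsK C i w').ncard : ℝ)) M - min (((clsK (C \ A) i w').ncard : ℝ)) M)
        (fun w' _ => by linarith [hterm i w']) hwK |>.trans' ?_
      linarith [hspecial]
    rw [Finset.sum_sub_distrib] at h1
    linarith
  -- outer sum
  have h2 : (A.ncard : ℝ) ≤ ∑ i' : ZMod (8 * k),
      (∑ w' ∈ K i', min (((clsK C i' w').ncard : ℝ)) M
        - ∑ w' ∈ K i', min (((clsK (C \ A) i' w').ncard : ℝ)) M) := by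
    refine Finset.single_le_sum (f := fun i' =>
        ∑ w' ∈ K i', min (((clsK C i' w').ncard : ℝ)) M
        - ∑ w' ∈ K i', min (((clsK (C \ A) i' w').ncard : ℝ)) M)
      (fun i' _ => by linarith [hinner_le i']) (Finset.mem_univ i) |>.trans' ?_
    linarith [hinner_i]
  rw [Finset.sum_sub_distrib] at h2
  unfold Phi
  linarith

lemma Phi_lt {C₀ : Set (ZMod (8 * k) → V)} {M s β : ℝ} (hs0 : 0 < s) (hβ : 0 < β)
    (hk : 0 < k) (hM : M = 2 * s / β)
    (hkey : ∀ i : ZMod (8 * k),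
      ((keys C₀ i).ncard : ℝ) ≤ β * (C₀.ncard : ℝ) / (16 * (k : ℝ) * s))
    (i₀ : ZMod (8 * k)) (w₀ : {j : ZMod (8 * k) // j ≠ i₀ + 1 ∧ j ≠ i₀ + 2} → V)
    (hw₀ : w₀ ∈ keys C₀ i₀) (hc : ((clsK C₀ i₀ w₀).ncard : ℝ) < M) :
    Phi C₀ C₀ M < (C₀.ncard : ℝ) := by
  have hM0 : 0 < M := by rw [hM]; positivity
  set K := fun i' : ZMod (8 * k) => (Set.toFinite (keys C₀ i')).toFinset with hK
  have hcard : ∀ i' : ZMod (8 * k), ((K i').card : ℕ) = (keys C₀ i').ncard := by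
    intro i'
    rw [Set.ncard_eq_toFinset_card (keys C₀ i') (Set.toFinite _)]
  have hw₀K : w₀ ∈ K i₀ := by
    rw [hK, Set.Finite.mem_toFinset]; exact hw₀
  have hinner_lt : ∑ w ∈ K i₀, min (((clsK C₀ i₀ w).ncard : ℝ)) M
      < ((keys C₀ i₀).ncard : ℝ) * M := by
    have := Finset.sum_lt_sum (f := fun w => min (((clsK C₀ i₀ w).ncard : ℝ)) M)
      (g := fun _ => M) (s := K i₀)
      (fun w _ => min_le_right _ _)
      ⟨w₀, hw₀K, by rw [min_eq_left (le_of_lt hc)]; exact hc⟩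
    rwa [Finset.sum_const, nsmul_eq_mul, hcard] at this
  have hinner_le : ∀ i' : ZMod (8 * k), ∑ w ∈ K i', min (((clsK C₀ i' w).ncard : ℝ)) M
      ≤ ((keys C₀ i').ncard : ℝ) * M := by
    intro i'
    calc ∑ w ∈ K i', min (((clsK C₀ i' w).ncard : ℝ)) M
        ≤ ∑ _w ∈ K i', M := Finset.sum_le_sum fun w _ => min_le_right _ _
      _ = ((keys C₀ i').ncard : ℝ) * M := by
          rw [Finset.sum_const, nsmul_eq_mul, hcard]
  have houter : Phi C₀ C₀ M < ∑ _i : ZMod (8 * k),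
      β * (C₀.ncard : ℝ) / (16 * (k : ℝ) * s) * M := by
    refine lt_of_lt_of_le (Finset.sum_lt_sum (fun i' _ => hinner_le i')
      ⟨i₀, Finset.mem_univ i₀, hinner_lt⟩) ?_
    refine Finset.sum_le_sum fun i' _ => ?_
    exact mul_le_mul_of_nonneg_right (hkey i') (le_of_lt hM0)
  rw [Finset.sum_const, Finset.card_univ, ZMod.card, nsmul_eq_mul] at houter
  have hcalc : ((8 * k : ℕ) : ℝ) * (β * (C₀.ncard : ℝ) / (16 * (k : ℝ) * s) * M)
      = (C₀.ncard : ℝ) := by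
    rw [hM]
    have hkR : (k : ℝ) ≠ 0 := Nat.cast_ne_zero.2 hk.ne'
    push_cast
    field_simp
    ring
  rwa [hcalc] at houter

end S12Aux

/-- Lemma 2.12: every non-empty `β`-good set has a non-empty `β`-nice subset. -/
theorem statement_12 {V : Type*} [Fintype V] (G : SimpleGraph V) (k : ℕ) (hk : 0 < k)
    (β : ℝ) (hβ : 0 < β) (C₀ : Set (ZMod (8 * k) → V)) (hne : C₀.Nonempty)
    (hgood : Paper.IsGood G k β C₀) :
    ∃ C ⊆ C₀, C.Nonempty ∧ Paper.IsNice G k β C := by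
  classical
  haveI : NeZero (8 * k) := ⟨by omega⟩
  obtain ⟨s, hs0, hcyc, hsb, hkey⟩ := hgood
  by_cases hnice0 : Paper.IsNice G k β C₀
  · exact ⟨C₀, Set.Subset.rfl, hne, hnice0⟩
  set M : ℝ := 2 * s / β with hMdef
  have hM0 : 0 < M := by rw [hMdef]; positivity
  have hkey' : ∀ i : ZMod (8 * k),
      ((S12Aux.keys C₀ i).ncard : ℝ) ≤ β * (C₀.ncard : ℝ) / (16 * (k : ℝ) * s) := hkey
  -- extraction of a violating triple from non-niceness
  have hviol : ∀ C : Set (ZMod (8 * k) → V), C ⊆ C₀ → ¬ Paper.IsNice G k β C →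
      ∃ (i : ZMod (8 * k)) (y : ZMod (8 * k) → V) (u : V),
        β * (({x ∈ C | ∀ j, j ≠ i + 1 → j ≠ i + 2 → x j = y j}).ncard : ℝ) <
          (({x ∈ C | (∀ j, j ≠ i + 1 → j ≠ i + 2 → x j = y j) ∧
              (x (i + 1) = u ∨ x (i + 2) = u)}).ncard : ℝ) := by
    intro C hC hn
    rw [Paper.IsNice, not_and_or] at hn
    rcases hn with h1 | h2
    · exact absurd (fun x hx => hcyc x (hC hx)) h1
    · push_neg at h2
      obtain ⟨i, y, u, h⟩ := h2
      exact ⟨i, y, u, h⟩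
  -- bounding sets that agree off one coordinate
  have hbound : ∀ (c : ZMod (8 * k)) (B : Set (ZMod (8 * k) → V)), B ⊆ C₀ →
      (∀ x ∈ B, ∀ x' ∈ B, ∀ j, j ≠ c → x j = x' j) → (B.ncard : ℝ) ≤ s := by
    intro c B hBC hag
    rcases B.eq_empty_or_nonempty with h | ⟨y', hy'⟩
    · rw [h]; simpa using le_of_lt hs0
    · refine le_trans ?_ (hsb y' (hBC hy') c)
      exact Nat.cast_le.2 (Set.ncard_le_ncard
        (fun x hx => ⟨hBC hx, fun j hj => hag x hx y' hy' j hj⟩) (Set.toFinite _))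
  -- step analysis: a violation yields a small class and a nonempty removable set
  have hstep : ∀ C : Set (ZMod (8 * k) → V), C ⊆ C₀ →
      ∀ (i : ZMod (8 * k)) (y : ZMod (8 * k) → V) (u : V),
      β * (({x ∈ C | ∀ j, j ≠ i + 1 → j ≠ i + 2 → x j = y j}).ncard : ℝ) <
        (({x ∈ C | (∀ j, j ≠ i + 1 → j ≠ i + 2 → x j = y j) ∧
            (x (i + 1) = u ∨ x (i + 2) = u)}).ncard : ℝ) →
      ∃ w : {j : ZMod (8 * k) // j ≠ i + 1 ∧ j ≠ i + 2} → V,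
        w ∈ S12Aux.keys C₀ i ∧
        ∃ A : Set (ZMod (8 * k) → V), A ⊆ S12Aux.clsK C i w ∧ A.Nonempty ∧
          ((S12Aux.clsK C i w).ncard : ℝ) < M := by
    intro C hC i y u hv
    set Y := {x ∈ C | ∀ j, j ≠ i + 1 → j ≠ i + 2 → x j = y j} with hY
    set A := {x ∈ C | (∀ j, j ≠ i + 1 → j ≠ i + 2 → x j = y j) ∧
        (x (i + 1) = u ∨ x (i + 2) = u)} with hA
    have hYw : Y = S12Aux.clsK C i (fun j => y j.1) := by
      ext x
      simp only [hY, S12Aux.clsK, Set.mem_setOf_eq]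
      exact and_congr_right fun _ =>
        ⟨fun h j => h j.1 j.2.1 j.2.2, fun h j h1 h2 => h ⟨j, h1, h2⟩⟩
    have hAY : A ⊆ Y := fun x hx => ⟨hx.1, hx.2.1⟩
    have hAne : A.Nonempty := by
      rcases A.eq_empty_or_nonempty with h | h
      · rw [h] at hv
        simp only [Set.ncard_empty, Nat.cast_zero] at hv
        exact absurd hv (not_lt.2 (by positivity))
      · exact h
    obtain ⟨x₀, hx₀⟩ := hAne
    set A₁ := {x ∈ C | (∀ j, j ≠ i + 1 → j ≠ i + 2 → x j = y j) ∧ x (i + 1) = u} with hA1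
    set A₂ := {x ∈ C | (∀ j, j ≠ i + 1 → j ≠ i + 2 → x j = y j) ∧ x (i + 2) = u} with hA2
    have hsplit : A ⊆ A₁ ∪ A₂ := by
      intro x hx
      rcases hx.2.2 with h | h
      · exact Or.inl ⟨hx.1, hx.2.1, h⟩
      · exact Or.inr ⟨hx.1, hx.2.1, h⟩
    have h1 : (A₁.ncard : ℝ) ≤ s := by
      refine hbound (i + 2) A₁ (fun x hx => hC hx.1) ?_
      intro x hx x' hx' j hj
      by_cases hj1 : j = i + 1
      · rw [hj1, hx.2.2, hx'.2.2]
      · rw [hx.2.1 j hj1 hj, hx'.2.1 j hj1 hj]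
    have h2 : (A₂.ncard : ℝ) ≤ s := by
      refine hbound (i + 1) A₂ (fun x hx => hC hx.1) ?_
      intro x hx x' hx' j hj
      by_cases hj2 : j = i + 2
      · rw [hj2, hx.2.2, hx'.2.2]
      · rw [hx.2.1 j hj hj2, hx'.2.1 j hj hj2]
    have hAcard : (A.ncard : ℝ) ≤ 2 * s := by
      have hu1 : A.ncard ≤ (A₁ ∪ A₂).ncard := Set.ncard_le_ncard hsplit (Set.toFinite _)
      have hu2 := Set.ncard_union_le A₁ A₂
      have : (A.ncard : ℝ) ≤ (A₁.ncard : ℝ) + (A₂.ncard : ℝ) := by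
        exact_mod_cast Nat.cast_le.2 (hu1.trans hu2)
      linarith
    have hYlt : ((Y.ncard : ℝ)) < M := by
      rw [hMdef, lt_div_iff₀ hβ]
      have hmc : (Y.ncard : ℝ) * β = β * (Y.ncard : ℝ) := mul_comm _ _
      linarith
    refine ⟨fun j => y j.1, ⟨x₀, hC hx₀.1, fun j => hx₀.2.1 j.1 j.2.1 j.2.2⟩,
      A, ?_, ⟨x₀, hx₀⟩, ?_⟩
    · rw [← hYw]; exact hAY
    · rw [← hYw]; exact hYlt
  -- strictness of the potential bound, via the violation for `C₀`
  obtain ⟨i₀, y₀, u₀, hv₀⟩ := hviol C₀ Set.Subset.rfl hnice0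
  obtain ⟨w₀, hw₀, A₀, hA₀, hA₀ne, hc₀⟩ := hstep C₀ Set.Subset.rfl i₀ y₀ u₀ hv₀
  have hPhilt : S12Aux.Phi C₀ C₀ M < (C₀.ncard : ℝ) :=
    S12Aux.Phi_lt hs0 hβ hk hMdef hkey' i₀ w₀ hw₀ hc₀
  set D : ℝ := (C₀.ncard : ℝ) - S12Aux.Phi C₀ C₀ M with hD
  have hD0 : 0 < D := by rw [hD]; linarith
  -- main induction
  have main : ∀ n : ℕ, ∀ C : Set (ZMod (8 * k) → V), C ⊆ C₀ → C.ncard = n →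
      S12Aux.Phi C₀ C M ≤ (C.ncard : ℝ) - D →
      ∃ C' ⊆ C₀, C'.Nonempty ∧ Paper.IsNice G k β C' := by
    intro n
    induction n using Nat.strong_induction_on with
    | _ n ih =>
      intro C hC hcard hinv
      have hPhi0 := S12Aux.Phi_nonneg C₀ C (le_of_lt hM0)
      have hCposR : (0 : ℝ) < (C.ncard : ℝ) := by linarith
      have hCpos : 0 < C.ncard := by exact_mod_cast hCposR
      have hCne : C.Nonempty := Set.nonempty_of_ncard_ne_zero hCpos.ne'
      by_cases hn : Paper.IsNice G k β C
      · exact ⟨C, hC, hCne, hn⟩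
      obtain ⟨i, y, u, hv⟩ := hviol C hC hn
      obtain ⟨w, hwK, A, hAcls, hAne, hclt⟩ := hstep C hC i y u hv
      have hAC : A ⊆ C := hAcls.trans (S12Aux.clsK_subset C i w)
      have hdrop := S12Aux.Phi_drop (C₀ := C₀) hAcls hwK hclt
      have hAle : A.ncard ≤ C.ncard := Set.ncard_le_ncard hAC (Set.toFinite _)
      have hApos : 0 < A.ncard := (Set.ncard_pos (Set.toFinite _)).2 hAne
      have hdiffcard : (C \ A).ncard = C.ncard - A.ncard :=
        Set.ncard_diff hAC (Set.toFinite _)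
      refine ih ((C \ A).ncard) ?_ (C \ A) (Set.diff_subset.trans hC) rfl ?_
      · rw [hdiffcard, ← hcard]; omega
      · rw [hdiffcard, Nat.cast_sub hAle]
        linarith
  exact main C₀.ncard C₀ Set.Subset.rfl rfl (by rw [hD]; linarith)
end

section
/- Let ε, K > 0 be constants with ε < 1/6. Let n be sufficiently large in terms of ε and K, and let G be an n-vertex graph with Δ(G) ≤ K·n^{1/3+ε}. Assume G has q copies of C_4 and every edge of G is contained in at most (96·log n / n^{4/3+ε})·q copies of C_4. Then there exist a vertex v ∈ V(G), a real number s > 0 and a symmetric set D ⊆ V(G)^3 of size at least q/(n·log n) such that: (1) for each (x, y, z) ∈ D, the vertices v, x, y, z are distinct and form a 4-cycle in this order (i.e. vx, xy, yz, zv are all edges); (2) for each (x, y, z) ∈ D, d(v, y) ≤ s and d(x, z) ≤ s; (3) for every fixed x ∈ V(G), there are at most 384·(log n)·q/(n^{4/3+ε}·s) vertices y ∈ V(G) for which there exists z ∈ V(G) with (x, y, z) ∈ D. -/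
open Real

open Finset

namespace S15

lemma zmod4_cases (i : ZMod 4) : i = 0 ∨ i = 1 ∨ i = 2 ∨ i = 3 := by revert i; decide

variable {n : ℕ}

/-- codegree -/
noncomputable def codeg (G : SimpleGraph (Fin n)) (a b : Fin n) : ℕ :=
  (G.neighborSet a ∩ G.neighborSet b).ncard

lemma codeg_comm (G : SimpleGraph (Fin n)) (a b : Fin n) : codeg G a b = codeg G b a := by
  unfold codeg; rw [Set.inter_comm]

def cyc4 (G : SimpleGraph (Fin n)) (a b c d : Fin n) : Prop :=
  a ≠ b ∧ a ≠ c ∧ a ≠ d ∧ b ≠ c ∧ b ≠ d ∧ c ≠ d ∧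
    G.Adj a b ∧ G.Adj b c ∧ G.Adj c d ∧ G.Adj d a

open scoped Classical in
noncomputable def Tv (G : SimpleGraph (Fin n)) (v : Fin n) : Finset (Fin n × Fin n × Fin n) :=
  univ.filter (fun t => cyc4 G v t.1 t.2.1 t.2.2 ∧ codeg G t.1 t.2.2 ≤ codeg G v t.2.1)

lemma mem_Tv {G : SimpleGraph (Fin n)} {v x y z : Fin n} :
    (x, y, z) ∈ Tv G v ↔ cyc4 G v x y z ∧ codeg G x z ≤ codeg G v y := by
  simp [Tv]

open scoped Classical in
noncomputable def DD (G : SimpleGraph (Fin n)) (v : Fin n) (j : ℕ) :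
    Finset (Fin n × Fin n × Fin n) :=
  (Tv G v).filter (fun t => 2 ^ j ≤ codeg G v t.2.1 ∧ codeg G v t.2.1 < 2 ^ (j + 1))

lemma mem_DD {G : SimpleGraph (Fin n)} {v x y z : Fin n} {j : ℕ} :
    (x, y, z) ∈ DD G v j ↔ ((x, y, z) ∈ Tv G v ∧
      (2 ^ j ≤ codeg G v y ∧ codeg G v y < 2 ^ (j + 1))) := by
  simp [DD]

open scoped Classical in
noncomputable def AF (G : SimpleGraph (Fin n)) : Finset (ZMod 4 → Fin n) :=
  univ.filter (fun c => Function.Injective c ∧ ∀ i, G.Adj (c i) (c (i + 1)))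

open scoped Classical in
noncomputable def AE (G : SimpleGraph (Fin n)) (e : Sym2 (Fin n)) : Finset (ZMod 4 → Fin n) :=
  univ.filter (fun c => Function.Injective c ∧ (∀ i, G.Adj (c i) (c (i + 1))) ∧
    ∃ i, s(c i, c (i + 1)) = e)

lemma card_AF (G : SimpleGraph (Fin n)) : Paper.c4Count G = (AF G).card / 8 := by
  unfold Paper.c4Count
  congr 1
  have h : {x : ZMod 4 → Fin n | Function.Injective x ∧ ∀ i, G.Adj (x i) (x (i + 1))}
      = ↑(AF G) := by
    ext c; simp [AF]
  calc Nat.card {x : ZMod 4 → Fin n // Function.Injective x ∧ ∀ i, G.Adj (x i) (x (i + 1))}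
      = Set.ncard {x : ZMod 4 → Fin n | Function.Injective x ∧ ∀ i, G.Adj (x i) (x (i + 1))} :=
        Nat.card_coe_set_eq _
    _ = (AF G).card := by rw [h, Set.ncard_coe_finset]

lemma card_AE (G : SimpleGraph (Fin n)) (e : Sym2 (Fin n)) :
    Paper.c4CountEdge G e = (AE G e).card / 8 := by
  unfold Paper.c4CountEdge
  congr 1
  have h : {x : ZMod 4 → Fin n | Function.Injective x ∧ (∀ i, G.Adj (x i) (x (i + 1))) ∧
      ∃ i, s(x i, x (i + 1)) = e} = ↑(AE G e) := by
    ext c; simp [AE]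
  calc Nat.card {x : ZMod 4 → Fin n // Function.Injective x ∧ (∀ i, G.Adj (x i) (x (i + 1))) ∧
        ∃ i, s(x i, x (i + 1)) = e}
      = Set.ncard {x : ZMod 4 → Fin n | Function.Injective x ∧ (∀ i, G.Adj (x i) (x (i + 1))) ∧
        ∃ i, s(x i, x (i + 1)) = e} := Nat.card_coe_set_eq _
    _ = (AE G e).card := by rw [h, Set.ncard_coe_finset]

/-- the basic labelled 4-cycle function -/
def cf {V : Type*} (a b c d : V) : ZMod 4 → V := fun i =>
  if i = 0 then a else if i = 1 then b else if i = 2 then c else d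

lemma cf0 {V : Type*} (a b c d : V) : cf a b c d 0 = a := rfl

lemma cf1 {V : Type*} (a b c d : V) : cf a b c d 1 = b := by
  simp [cf, show (1 : ZMod 4) ≠ 0 by decide]

lemma cf2 {V : Type*} (a b c d : V) : cf a b c d 2 = c := by
  simp [cf, show (2 : ZMod 4) ≠ 0 by decide, show (2 : ZMod 4) ≠ 1 by decide]

lemma cf3 {V : Type*} (a b c d : V) : cf a b c d 3 = d := by
  simp [cf, show (3 : ZMod 4) ≠ 0 by decide, show (3 : ZMod 4) ≠ 1 by decide,
    show (3 : ZMod 4) ≠ 2 by decide]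

lemma cf_inj {V : Type*} {a b c d : V} (h1 : a ≠ b) (h2 : a ≠ c) (h3 : a ≠ d)
    (h4 : b ≠ c) (h5 : b ≠ d) (h6 : c ≠ d) : Function.Injective (cf a b c d) := by
  intro i j hij
  rcases zmod4_cases i with rfl | rfl | rfl | rfl <;>
    rcases zmod4_cases j with rfl | rfl | rfl | rfl <;>
    simp_all [cf0, cf1, cf2, cf3]

lemma cf_adj {G : SimpleGraph (Fin n)} {a b c d : Fin n} (hab : G.Adj a b) (hbc : G.Adj b c)
    (hcd : G.Adj c d) (hda : G.Adj d a) :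
    ∀ i, G.Adj (cf a b c d i) (cf a b c d (i + 1)) := by
  intro i
  rcases zmod4_cases i with rfl | rfl | rfl | rfl
  · rw [show (0 : ZMod 4) + 1 = 1 by decide, cf0, cf1]; exact hab
  · rw [show (1 : ZMod 4) + 1 = 2 by decide, cf1, cf2]; exact hbc
  · rw [show (2 : ZMod 4) + 1 = 3 by decide, cf2, cf3]; exact hcd
  · rw [show (3 : ZMod 4) + 1 = 0 by decide, cf3, cf0]; exact hda

lemma cf_eq_a {V : Type*} {a b c d : V} (h1 : b ≠ a) (h2 : c ≠ a) (h3 : d ≠ a) :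
    ∀ m, cf a b c d m = a → m = 0 := by
  intro m hm
  rcases zmod4_cases m with rfl | rfl | rfl | rfl
  · rfl
  · rw [cf1] at hm; exact absurd hm h1
  · rw [cf2] at hm; exact absurd hm h2
  · rw [cf3] at hm; exact absurd hm h3

lemma cf_eq_b {V : Type*} {a b c d : V} (h1 : a ≠ b) (h2 : c ≠ b) (h3 : d ≠ b) :
    ∀ m, cf a b c d m = b → m = 1 := by
  intro m hm
  rcases zmod4_cases m with rfl | rfl | rfl | rfl
  · rw [cf0] at hm; exact absurd hm h1
  · rfl
  · rw [cf2] at hm; exact absurd hm h2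
  · rw [cf3] at hm; exact absurd hm h3

open scoped Classical in
noncomputable def Yx (G : SimpleGraph (Fin n)) (v : Fin n) (j : ℕ) (x : Fin n) :
    Finset (Fin n) :=
  univ.filter (fun y => ∃ z, (x, y, z) ∈ DD G v j)

open scoped Classical in
noncomputable def NF (G : SimpleGraph (Fin n)) (v y : Fin n) : Finset (Fin n) :=
  univ.filter (fun w => G.Adj v w ∧ G.Adj y w)

lemma card_NF (G : SimpleGraph (Fin n)) (v y : Fin n) : (NF G v y).card = codeg G v y := by
  rw [codeg, ← Set.ncard_coe_finset]
  congr 1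
  ext w
  simp [NF, SimpleGraph.mem_neighborSet]

open scoped Classical in
noncomputable def PP (G : SimpleGraph (Fin n)) (v : Fin n) (j : ℕ) (x : Fin n) :
    Finset (Fin n × Fin n) :=
  (Yx G v j x).biUnion (fun y => ((NF G v y).erase x).image (fun w => (y, w)))

end S15

/-- Lemma 2.15: finding a vertex `v` and a large symmetric family of triples
extending `v` to `4`-cycles. -/
theorem statement_15 (ε K : ℝ) (hε0 : 0 < ε) (hε1 : ε < 1 / 6) (hK : 0 < K) :
    ∃ n₀ : ℕ, ∀ n : ℕ, n₀ ≤ n → ∀ G : SimpleGraph (Fin n), ∀ q : ℕ,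
      (∀ v, ((G.neighborSet v).ncard : ℝ) ≤ K * (n : ℝ) ^ ((1 : ℝ) / 3 + ε)) →
      Paper.c4Count G = q →
      (∀ e ∈ G.edgeSet, (Paper.c4CountEdge G e : ℝ) ≤
        96 * Real.logb 2 n / (n : ℝ) ^ ((4 : ℝ) / 3 + ε) * (q : ℝ)) →
      ∃ (v : Fin n) (s : ℝ) (D : Set (Fin n × Fin n × Fin n)), 0 < s ∧
        (∀ x y z, (x, y, z) ∈ D → (z, y, x) ∈ D) ∧
        (q : ℝ) / ((n : ℝ) * Real.logb 2 n) ≤ (D.ncard : ℝ) ∧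
        (∀ x y z, (x, y, z) ∈ D → (List.Pairwise (· ≠ ·) [v, x, y, z] ∧
          G.Adj v x ∧ G.Adj x y ∧ G.Adj y z ∧ G.Adj z v)) ∧
        (∀ x y z, (x, y, z) ∈ D →
          ((G.neighborSet v ∩ G.neighborSet y).ncard : ℝ) ≤ s ∧
          ((G.neighborSet x ∩ G.neighborSet z).ncard : ℝ) ≤ s) ∧
        (∀ x : Fin n, (({y | ∃ z, (x, y, z) ∈ D}).ncard : ℝ) ≤
          384 * Real.logb 2 n * (q : ℝ) / ((n : ℝ) ^ ((4 : ℝ) / 3 + ε) * s)) := by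
  classical
  refine ⟨2, ?_⟩
  intro n hn G q hΔ hq hEdge
  clear hΔ hε1 hK
  have hn2 : 2 ≤ n := hn
  have hnR : (2:ℝ) ≤ (n:ℝ) := by exact_mod_cast hn
  -- Step 1 : at least 8q labelled 4-cycles
  have hA8 : 8 * q ≤ (S15.AF G).card := by
    rw [← hq, S15.card_AF]
    exact Nat.mul_div_le _ 8
  -- Step 2 : choose a root vertex maximizing the number of rooted marked triples
  obtain ⟨v₀, -, hv₀⟩ := Finset.exists_max_image (Finset.univ : Finset (Fin n))
    (fun v => (S15.Tv G v).card) ⟨⟨0, by omega⟩, Finset.mem_univ _⟩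
  set SS : Finset (Fin n × (Fin n × Fin n × Fin n) × Bool) :=
    Finset.univ.filter (fun p => p.2.1 ∈ S15.Tv G p.1) with hSSdef
  have hAS : (S15.AF G).card ≤ SS.card := by
    apply Finset.card_le_card_of_injOn (fun c =>
      if S15.codeg G (c 1) (c 3) ≤ S15.codeg G (c 0) (c 2)
      then (c 0, (c 1, c 2, c 3), false) else (c 1, (c 2, c 3, c 0), true))
    · intro c hc
      rw [S15.AF, Finset.mem_coe, Finset.mem_filter] at hc
      obtain ⟨-, hinj, hadj⟩ := hc
      have hne : ∀ i j : ZMod 4, i ≠ j → c i ≠ c j := fun i j hij h => hij (hinj h)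
      have e01 : G.Adj (c 0) (c 1) := by
        have := hadj 0; rwa [show (0:ZMod 4)+1 = 1 by decide] at this
      have e12 : G.Adj (c 1) (c 2) := by
        have := hadj 1; rwa [show (1:ZMod 4)+1 = 2 by decide] at this
      have e23 : G.Adj (c 2) (c 3) := by
        have := hadj 2; rwa [show (2:ZMod 4)+1 = 3 by decide] at this
      have e30 : G.Adj (c 3) (c 0) := by
        have := hadj 3; rwa [show (3:ZMod 4)+1 = 0 by decide] at this
      by_cases hco : S15.codeg G (c 1) (c 3) ≤ S15.codeg G (c 0) (c 2)
      · simp only [Finset.mem_coe]; rw [if_pos hco]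
        simp only [hSSdef, Finset.mem_filter, Finset.mem_univ, true_and]
        exact S15.mem_Tv.mpr ⟨⟨hne 0 1 (by decide), hne 0 2 (by decide), hne 0 3 (by decide),
          hne 1 2 (by decide), hne 1 3 (by decide), hne 2 3 (by decide), e01, e12, e23, e30⟩, hco⟩
      · simp only [Finset.mem_coe]; rw [if_neg hco]
        simp only [hSSdef, Finset.mem_filter, Finset.mem_univ, true_and]
        refine S15.mem_Tv.mpr ⟨⟨hne 1 2 (by decide), hne 1 3 (by decide), hne 1 0 (by decide),
          hne 2 3 (by decide), hne 2 0 (by decide), hne 3 0 (by decide), e12, e23, e30, e01⟩, ?_⟩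
        rw [S15.codeg_comm]
        exact le_of_lt (lt_of_not_ge hco)
    · intro c hc c' hc' hf
      have hkey : c 0 = c' 0 ∧ c 1 = c' 1 ∧ c 2 = c' 2 ∧ c 3 = c' 3 := by
        dsimp only at hf
        split_ifs at hf <;>
          simp only [Prod.mk.injEq, Bool.false_eq_true, Bool.true_eq_false, and_false,
            false_and, and_true, true_and] at hf <;> tauto
      funext i
      rcases S15.zmod4_cases i with rfl | rfl | rfl | rfl <;> tauto
  have hfib : ∀ v ∈ SS.image (fun p => p.1),
      (SS.filter (fun p => p.1 = v)).card ≤ 2 * (S15.Tv G v₀).card := by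
    intro v _
    have h1 : (SS.filter (fun p => p.1 = v)).card ≤ ((S15.Tv G v) ×ˢ (Finset.univ : Finset Bool)).card := by
      apply Finset.card_le_card_of_injOn (fun p => (p.2.1, p.2.2))
      · intro p hp
        simp only [hSSdef, Finset.mem_coe, Finset.mem_filter, Finset.mem_univ, true_and] at hp
        exact Finset.mem_product.mpr ⟨hp.2 ▸ hp.1, Finset.mem_univ _⟩
      · intro p hp p' hp' h
        simp only [Finset.coe_filter, Set.mem_setOf_eq] at hp hp'
        simp only [Prod.mk.injEq] at h
        have : p.2 = p'.2 := Prod.ext h.1 h.2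
        exact Prod.ext (hp.2.trans hp'.2.symm) this
    rw [Finset.card_product] at h1
    simp only [Finset.card_univ, Fintype.card_bool] at h1
    calc (SS.filter (fun p => p.1 = v)).card ≤ (S15.Tv G v).card * 2 := h1
    _ ≤ (S15.Tv G v₀).card * 2 := Nat.mul_le_mul_right 2 (hv₀ v (Finset.mem_univ v))
    _ = 2 * (S15.Tv G v₀).card := Nat.mul_comm _ _
  have hSle : SS.card ≤ (2 * (S15.Tv G v₀).card) * n := by
    calc SS.card ≤ (2 * (S15.Tv G v₀).card) * (SS.image (fun p => p.1)).card :=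
      Finset.card_le_mul_card_image _ _ hfib
    _ ≤ (2 * (S15.Tv G v₀).card) * n := by
      apply Nat.mul_le_mul_left
      calc (SS.image (fun p => p.1)).card ≤ (Finset.univ : Finset (Fin n)).card :=
        Finset.card_le_card (Finset.subset_univ _)
      _ = n := by simp
  have hTq : 4 * q ≤ (S15.Tv G v₀).card * n := by
    have h8 : 8 * q ≤ 2 * ((S15.Tv G v₀).card * n) := by
      have := le_trans hA8 (le_trans hAS hSle)
      rw [mul_assoc] at this
      exact this
    omega
  -- Step 3 : dyadic pigeonhole over codegrees
  set J := Nat.clog 2 (n + 1) with hJdef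
  have hnJ : n + 1 ≤ 2 ^ J := Nat.le_pow_clog (by norm_num) _
  have hJ1 : 1 ≤ J := by
    by_contra h
    push_neg at h
    have hJ0 : J = 0 := by omega
    rw [hJ0] at hnJ
    simp at hnJ
    omega
  have hcov : S15.Tv G v₀ ⊆ (Finset.range J).biUnion (S15.DD G v₀) := by
    rintro ⟨x, y, z⟩ ht
    obtain ⟨⟨d1, d2, d3, d4, d5, d6, a1, a2, a3, a4⟩, -⟩ := S15.mem_Tv.mp ht
    have hxmem : x ∈ G.neighborSet v₀ ∩ G.neighborSet y := ⟨a1, a2.symm⟩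
    have hpos : 0 < S15.codeg G v₀ y := by
      rw [S15.codeg]
      exact (Set.ncard_pos (Set.toFinite _)).mpr ⟨x, hxmem⟩
    have hub : S15.codeg G v₀ y ≤ n := by
      rw [S15.codeg]
      calc (G.neighborSet v₀ ∩ G.neighborSet y).ncard ≤ (Set.univ : Set (Fin n)).ncard :=
        Set.ncard_le_ncard (Set.subset_univ _) Set.finite_univ
      _ = n := by rw [Set.ncard_univ]; simp
    refine Finset.mem_biUnion.mpr ⟨Nat.log 2 (S15.codeg G v₀ y), Finset.mem_range.mpr ?_, ?_⟩
    · have h1 : (2:ℕ) ^ Nat.log 2 (S15.codeg G v₀ y) < 2 ^ J :=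
        lt_of_le_of_lt (le_trans (Nat.pow_log_le_self 2 hpos.ne') hub) (by omega)
      exact (Nat.pow_lt_pow_iff_right (by norm_num)).mp h1
    · exact S15.mem_DD.mpr ⟨ht, Nat.pow_log_le_self 2 hpos.ne',
        Nat.lt_pow_succ_log_self (by norm_num) _⟩
  obtain ⟨j₀, hj₀r, hj₀⟩ := Finset.exists_max_image (Finset.range J)
    (fun j => (S15.DD G v₀ j).card) ⟨0, Finset.mem_range.mpr hJ1⟩
  have hTD : (S15.Tv G v₀).card ≤ J * (S15.DD G v₀ j₀).card := by
    calc (S15.Tv G v₀).card ≤ ((Finset.range J).biUnion (S15.DD G v₀)).card :=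
      Finset.card_le_card hcov
    _ ≤ ∑ j ∈ Finset.range J, (S15.DD G v₀ j).card := Finset.card_biUnion_le
    _ ≤ (Finset.range J).card • (S15.DD G v₀ j₀).card :=
      Finset.sum_le_card_nsmul _ _ _ (fun j hj => hj₀ j hj)
    _ = J * (S15.DD G v₀ j₀).card := by rw [Finset.card_range, smul_eq_mul]
  -- basic real estimates
  have hL1 : 1 ≤ Real.logb 2 n := by
    rw [show (1:ℝ) = Real.logb 2 2 from (Real.logb_self_eq_one (by norm_num)).symm]
    exact Real.logb_le_logb_of_le (by norm_num) (by norm_num) hnR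
  have hJL : (J:ℝ) ≤ 2 * Real.logb 2 n := by
    have h2 : (2:ℕ) ^ (J - 1) ≤ n := by
      have h := Nat.pow_pred_clog_lt_self (b := 2) (by norm_num) (x := n + 1) (by omega)
      rw [Nat.pred_eq_sub_one, ← hJdef] at h
      omega
    have h2R : ((2:ℝ)) ^ (J - 1) ≤ (n:ℝ) := by exact_mod_cast h2
    have hlb : ((J - 1 : ℕ) : ℝ) ≤ Real.logb 2 n := by
      have hmono : Real.logb 2 ((2:ℝ) ^ (J - 1)) ≤ Real.logb 2 n :=
        Real.logb_le_logb_of_le (by norm_num) (by positivity) h2R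
      rwa [Real.logb_pow, Real.logb_self_eq_one (by norm_num), mul_one] at hmono
    have hc : ((J - 1 : ℕ) : ℝ) = (J:ℝ) - 1 := by
      push_cast [Nat.cast_sub hJ1]
      ring
    rw [hc] at hlb
    linarith
  refine ⟨v₀, (2:ℝ)^(j₀+1), ↑(S15.DD G v₀ j₀), by positivity, ?_, ?_, ?_, ?_, ?_⟩
  · -- symmetry
    rintro x y z hD
    rw [Finset.mem_coe, S15.mem_DD] at hD ⊢
    obtain ⟨hT, hlo, hhi⟩ := hD
    obtain ⟨⟨d1, d2, d3, d4, d5, d6, a1, a2, a3, a4⟩, hco⟩ := S15.mem_Tv.mp hT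
    refine ⟨S15.mem_Tv.mpr ⟨⟨d3, d2, d1, d6.symm, d5.symm, d4.symm, a4.symm, a3.symm, a2.symm,
      a1.symm⟩, ?_⟩, hlo, hhi⟩
    rw [S15.codeg_comm]
    exact hco
  · -- size
    rw [Set.ncard_coe_finset]
    have hnpos : (0:ℝ) < (n:ℝ) := by linarith
    have hLpos : (0:ℝ) < Real.logb 2 n := by linarith
    rw [div_le_iff₀ (by positivity)]
    have c1 : (4 * q : ℝ) ≤ ((J * (S15.DD G v₀ j₀).card) * n : ℝ) := by
      exact_mod_cast le_trans hTq (Nat.mul_le_mul_right n hTD)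
    have hDnn : (0:ℝ) ≤ ((S15.DD G v₀ j₀).card : ℝ) := Nat.cast_nonneg _
    nlinarith [mul_le_mul_of_nonneg_right (mul_le_mul_of_nonneg_right hJL hDnn)
      (le_of_lt hnpos)]
  · -- cycle conditions
    rintro x y z hD
    rw [Finset.mem_coe, S15.mem_DD] at hD
    obtain ⟨⟨d1, d2, d3, d4, d5, d6, a1, a2, a3, a4⟩, -⟩ := S15.mem_Tv.mp hD.1
    refine ⟨?_, a1, a2, a3, a4⟩
    refine List.Pairwise.cons ?_ (List.Pairwise.cons ?_ (List.Pairwise.cons ?_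
      (List.pairwise_singleton _ _)))
    · intro a ha
      simp only [List.mem_cons, List.mem_singleton, List.not_mem_nil, or_false] at ha
      rcases ha with rfl | rfl | rfl
      exacts [d1, d2, d3]
    · intro a ha
      simp only [List.mem_cons, List.mem_singleton, List.not_mem_nil, or_false] at ha
      rcases ha with rfl | rfl
      exacts [d4, d5]
    · intro a ha
      simp only [List.mem_cons, List.mem_singleton, List.not_mem_nil, or_false] at ha
      rcases ha with rfl
      exact d6
  · -- codegree bounds
    rintro x y z hD
    rw [Finset.mem_coe, S15.mem_DD] at hD
    obtain ⟨hT, -, hhi⟩ := hD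
    have hco := (S15.mem_Tv.mp hT).2
    have h1 : (S15.codeg G v₀ y : ℝ) ≤ (2:ℝ)^(j₀+1) := by
      have h2 : (S15.codeg G v₀ y : ℝ) < (((2:ℕ)^(j₀+1) : ℕ) : ℝ) := by exact_mod_cast hhi
      push_cast at h2
      linarith
    exact ⟨h1, le_trans (by exact_mod_cast hco) h1⟩
  · -- the degree-type condition
    intro x
    have hYeq : {y | ∃ z, (x, y, z) ∈ (↑(S15.DD G v₀ j₀) : Set (Fin n × Fin n × Fin n))}
        = ↑(S15.Yx G v₀ j₀ x) := by
      ext y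
      simp [S15.Yx]
    rw [hYeq, Set.ncard_coe_finset]
    have hnpos : (0:ℝ) < (n:ℝ) := by linarith
    have hnp : (0:ℝ) < (n:ℝ) ^ ((4:ℝ)/3 + ε) := Real.rpow_pos_of_pos hnpos _
    have hLnn : (0:ℝ) ≤ Real.logb 2 n := by linarith
    by_cases hY : (S15.Yx G v₀ j₀ x).Nonempty
    swap
    · rw [Finset.not_nonempty_iff_eq_empty] at hY
      rw [hY]
      simp only [Finset.card_empty, Nat.cast_zero]
      apply div_nonneg
      · have : (0:ℝ) ≤ (q:ℝ) := Nat.cast_nonneg _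
        nlinarith
      · positivity
    obtain ⟨y₁, hy₁⟩ := hY
    obtain ⟨z₁, hz₁⟩ := (Finset.mem_filter.mp hy₁).2
    have hvx : G.Adj v₀ x := (S15.mem_Tv.mp (S15.mem_DD.mp hz₁).1).1.2.2.2.2.2.2.1
    -- membership extraction for PP
    have hPmem : ∀ y w : Fin n, (y, w) ∈ S15.PP G v₀ j₀ x →
        (∃ z, (x, y, z) ∈ S15.DD G v₀ j₀) ∧ w ≠ x ∧ G.Adj v₀ w ∧ G.Adj y w := by
      intro y w hyw
      simp only [S15.PP, Finset.mem_biUnion, Finset.mem_image, Finset.mem_erase,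
        S15.NF, S15.Yx, Finset.mem_filter, Finset.mem_univ, true_and] at hyw
      obtain ⟨y', hy', w', ⟨hwx, hv, hyw'⟩, heq⟩ := hyw
      rw [Prod.mk.injEq] at heq
      obtain ⟨rfl, rfl⟩ := heq
      exact ⟨hy', hwx, hv, hyw'⟩
    have hfacts : ∀ y w : Fin n, (y, w) ∈ S15.PP G v₀ j₀ x →
        (v₀ ≠ x ∧ v₀ ≠ y ∧ v₀ ≠ w ∧ x ≠ y ∧ x ≠ w ∧ y ≠ w ∧
         G.Adj v₀ x ∧ G.Adj x y ∧ G.Adj y w ∧ G.Adj w v₀) := by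
      intro y w hyw
      obtain ⟨⟨z, hz⟩, hwx, hvw, hyww⟩ := hPmem y w hyw
      obtain ⟨⟨d1, d2, d3, d4, d5, d6, a1, a2, a3, a4⟩, -⟩ := S15.mem_Tv.mp (S15.mem_DD.mp hz).1
      exact ⟨d1, d2, hvw.ne, d4, fun h => hwx h.symm, hyww.ne, a1, a2, hyww, hvw.symm⟩
    -- lower bound for |PP|
    set m : ℕ := max 1 (2^j₀ - 1) with hm
    have hdisj : ∀ a ∈ S15.Yx G v₀ j₀ x, ∀ b ∈ S15.Yx G v₀ j₀ x, a ≠ b →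
        Disjoint (((S15.NF G v₀ a).erase x).image (fun w => (a, w)))
                 (((S15.NF G v₀ b).erase x).image (fun w => (b, w))) := by
      intro a _ b _ hab
      rw [Finset.disjoint_left]
      rintro ⟨y, w⟩ h1 h2
      simp only [Finset.mem_image] at h1 h2
      obtain ⟨w1, -, he1⟩ := h1
      obtain ⟨w2, -, he2⟩ := h2
      rw [Prod.mk.injEq] at he1 he2
      exact hab (he1.1.trans he2.1.symm)
    have hfibP : ∀ y ∈ S15.Yx G v₀ j₀ x,
        m ≤ (((S15.NF G v₀ y).erase x).image (fun w => (y, w))).card := by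
      intro y hy
      rw [Finset.card_image_of_injective _ (fun a b h => ((Prod.mk.injEq _ _ _ _).mp h).2)]
      obtain ⟨z, hz⟩ := (Finset.mem_filter.mp hy).2
      have hDz := S15.mem_DD.mp hz
      obtain ⟨⟨d1, d2, d3, d4, d5, d6, a1, a2, a3, a4⟩, -⟩ := S15.mem_Tv.mp hDz.1
      have hlo : 2^j₀ ≤ S15.codeg G v₀ y := hDz.2.1
      have hz_mem : z ∈ (S15.NF G v₀ y).erase x := by
        refine Finset.mem_erase.mpr ⟨fun h => d5 h.symm, ?_⟩
        simp only [S15.NF, Finset.mem_filter, Finset.mem_univ, true_and]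
        exact ⟨a4.symm, a3⟩
      have h1 : 1 ≤ ((S15.NF G v₀ y).erase x).card := Finset.card_pos.mpr ⟨z, hz_mem⟩
      have h2 : (S15.NF G v₀ y).card - 1 ≤ ((S15.NF G v₀ y).erase x).card :=
        Finset.pred_card_le_card_erase
      rw [S15.card_NF] at h2
      omega
    have hPlow : (S15.Yx G v₀ j₀ x).card * m ≤ (S15.PP G v₀ j₀ x).card := by
      rw [S15.PP, Finset.card_biUnion hdisj]
      have h1 : ∑ _y ∈ S15.Yx G v₀ j₀ x, m ≤ ∑ y ∈ S15.Yx G v₀ j₀ x,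
          (((S15.NF G v₀ y).erase x).image (fun w => (y, w))).card := Finset.sum_le_sum hfibP
      rwa [Finset.sum_const, smul_eq_mul] at h1
    -- upper bound for |PP| via the per-edge hypothesis
    have hPF : (S15.PP G v₀ j₀ x).card * 8 ≤ (S15.AE G s(v₀, x)).card := by
      have hcard8 : ((S15.PP G v₀ j₀ x) ×ˢ (Finset.univ : Finset (ZMod 4 × Bool))).card
          = (S15.PP G v₀ j₀ x).card * 8 := by
        rw [Finset.card_product, Finset.card_univ]
        norm_num
      rw [← hcard8]
      apply Finset.card_le_card_of_injOn
        (fun p => fun i => S15.cf v₀ x p.1.1 p.1.2 (p.2.1 + cond p.2.2 i (-i)))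
      · rintro ⟨⟨y, w⟩, k, b⟩ hp
        rw [Finset.mem_coe, Finset.mem_product] at hp
        obtain ⟨hne1, hne2, hne3, hne4, hne5, hne6, hA1, hA2, hA3, hA4⟩ := hfacts y w hp.1
        have hinj : Function.Injective (S15.cf v₀ x y w) :=
          S15.cf_inj hne1 hne2 hne3 hne4 hne5 hne6
        have hadjc := S15.cf_adj (G := G) hA1 hA2 hA3 hA4
        simp only [S15.AE, Finset.mem_coe, Finset.mem_filter, Finset.mem_univ, true_and]
        refine ⟨?_, ?_, ?_⟩
        · intro i i' hii
          have hsh := hinj hii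
          have hsh2 : cond b i (-i) = cond b i' (-i') := by
            exact add_left_cancel hsh
          cases b
          · simpa using hsh2
          · simpa using hsh2
        · intro i
          cases b
          · simp only [Bool.cond_false]
            have h := (hadjc (k + -(i+1))).symm
            rw [show k + -(i+1) + 1 = k + -i by ring] at h
            exact h
          · simp only [Bool.cond_true]
            have h := hadjc (k + i)
            rw [show k + (i+1) = (k + i) + 1 by ring] at *
            exact h
        · cases b
          · refine ⟨k - 1, ?_⟩
            simp only [Bool.cond_false]
            rw [show k + -(k-1) = 1 by ring, show k + -(k-1+1) = 0 by ring, S15.cf1, S15.cf0]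
            exact Sym2.eq_swap
          · refine ⟨-k, ?_⟩
            simp only [Bool.cond_true]
            rw [show k + -k = 0 by ring, show k + (-k+1) = 1 by ring, S15.cf0, S15.cf1]
      · rintro ⟨⟨y, w⟩, k, b⟩ hp ⟨⟨y', w'⟩, k', b'⟩ hp' hFF
        simp only [Finset.mem_coe, Finset.mem_product] at hp hp'
        obtain ⟨hne1, hne2, hne3, hne4, hne5, hne6, hA1, hA2, hA3, hA4⟩ := hfacts y w hp.1
        obtain ⟨he1, he2, he3, he4, he5, he6, hB1, hB2, hB3, hB4⟩ := hfacts y' w' hp'.1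
        have hcong : ∀ i : ZMod 4,
            S15.cf v₀ x y w (k + cond b i (-i)) = S15.cf v₀ x y' w' (k' + cond b' i (-i)) :=
          fun i => congrFun hFF i
        have hv' : ∀ mm, S15.cf v₀ x y' w' mm = v₀ → mm = 0 :=
          S15.cf_eq_a he1.symm he2.symm he3.symm
        have hx' : ∀ mm, S15.cf v₀ x y' w' mm = x → mm = 1 :=
          S15.cf_eq_b he1 he4.symm he5.symm
        cases b <;> cases b'
        · -- false false
          have h0 := hcong k
          simp only [Bool.cond_false] at hcong h0
          rw [show k + -k = 0 by ring, S15.cf0] at h0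
          have hk : k' + -k = 0 := hv' _ h0.symm
          have hkk : k' = k := by
            have h5 : k' = k' + -k + k := by ring
            rw [hk] at h5
            rw [h5]; ring
          rw [hkk] at hcong
          have h2 := hcong (k - 2)
          rw [show k + -(k-2) = 2 by ring, S15.cf2, S15.cf2] at h2
          have h3 := hcong (k - 3)
          rw [show k + -(k-3) = 3 by ring, S15.cf3, S15.cf3] at h3
          rw [Prod.mk.injEq, Prod.mk.injEq, Prod.mk.injEq]
          exact ⟨⟨h2, h3⟩, hkk.symm, rfl⟩
        · -- false true : contradiction
          have h0 := hcong k
          simp only [Bool.cond_false, Bool.cond_true] at hcong h0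
          rw [show k + -k = 0 by ring, S15.cf0] at h0
          have hk : k' + k = 0 := hv' _ h0.symm
          have h1 := hcong (k - 1)
          rw [show k + -(k-1) = 1 by ring, S15.cf1,
            show k' + (k-1) = (k' + k) - 1 by ring, hk,
            show (0:ZMod 4) - 1 = 3 by decide, S15.cf3] at h1
          exact absurd h1 he5
        · -- true false : contradiction
          have h0 := hcong (-k)
          simp only [Bool.cond_false, Bool.cond_true] at hcong h0
          rw [show k + -k = 0 by ring, S15.cf0, neg_neg] at h0
          have hk : k' + k = 0 := hv' _ h0.symm
          have h1 := hcong (1 - k)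
          rw [show k + (1-k) = 1 by ring, S15.cf1,
            show k' + -(1-k) = (k' + k) - 1 by ring, hk,
            show (0:ZMod 4) - 1 = 3 by decide, S15.cf3] at h1
          exact absurd h1 he5
        · -- true true
          have h0 := hcong (-k)
          simp only [Bool.cond_true] at hcong h0
          rw [show k + -k = 0 by ring, S15.cf0] at h0
          have hk : k' + -k = 0 := hv' _ h0.symm
          have hkk : k' = k := by
            have h5 : k' = k' + -k + k := by ring
            rw [hk] at h5
            rw [h5]; ring
          rw [hkk] at hcong
          have h2 := hcong (2 - k)
          rw [show k + (2-k) = 2 by ring, S15.cf2, S15.cf2] at h2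
          have h3 := hcong (3 - k)
          rw [show k + (3-k) = 3 by ring, S15.cf3, S15.cf3] at h3
          rw [Prod.mk.injEq, Prod.mk.injEq, Prod.mk.injEq]
          exact ⟨⟨h2, h3⟩, hkk.symm, rfl⟩
    have hPM : ((S15.PP G v₀ j₀ x).card : ℝ) ≤ 96 * Real.logb 2 n / (n:ℝ)^((4:ℝ)/3+ε) * q := by
      have h1 : (S15.PP G v₀ j₀ x).card ≤ Paper.c4CountEdge G s(v₀, x) := by
        rw [S15.card_AE]
        exact (Nat.le_div_iff_mul_le (by norm_num)).mpr hPF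
      have h2 := hEdge s(v₀, x) (G.mem_edgeSet.mpr hvx)
      have h3 : ((S15.PP G v₀ j₀ x).card : ℝ) ≤ (Paper.c4CountEdge G s(v₀, x) : ℝ) := by
        exact_mod_cast h1
      linarith
    have hm4 : 2^(j₀+1) ≤ 4 * m := by
      rcases Nat.eq_zero_or_pos j₀ with h | h
      · subst h; norm_num [hm]
      · have h2 : 2 ≤ 2^j₀ := by
          calc 2 = 2^1 := rfl
          _ ≤ 2^j₀ := Nat.pow_le_pow_right (by norm_num) h
        have hme : m = 2^j₀ - 1 := max_eq_right (by omega)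
        rw [hme, pow_succ]
        omega
    have hchainN : (S15.Yx G v₀ j₀ x).card * 2^(j₀+1) ≤ 4 * (S15.PP G v₀ j₀ x).card := by
      calc (S15.Yx G v₀ j₀ x).card * 2^(j₀+1) ≤ (S15.Yx G v₀ j₀ x).card * (4 * m) :=
        Nat.mul_le_mul_left _ hm4
      _ = 4 * ((S15.Yx G v₀ j₀ x).card * m) := by ring
      _ ≤ 4 * (S15.PP G v₀ j₀ x).card := Nat.mul_le_mul_left _ hPlow
    have hchain : ((S15.Yx G v₀ j₀ x).card : ℝ) * (2:ℝ)^(j₀+1)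
        ≤ 4 * (96 * Real.logb 2 n / (n:ℝ)^((4:ℝ)/3+ε) * q) := by
      have hNR : ((S15.Yx G v₀ j₀ x).card : ℝ) * (2:ℝ)^(j₀+1)
          ≤ 4 * ((S15.PP G v₀ j₀ x).card : ℝ) := by exact_mod_cast hchainN
      linarith
    rw [le_div_iff₀ (by positivity)]
    have hnp0 : ((n:ℝ)^((4:ℝ)/3+ε)) ≠ 0 := ne_of_gt hnp
    calc ((S15.Yx G v₀ j₀ x).card : ℝ) * ((n:ℝ)^((4:ℝ)/3+ε) * (2:ℝ)^(j₀+1))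
        = (((S15.Yx G v₀ j₀ x).card : ℝ) * (2:ℝ)^(j₀+1)) * (n:ℝ)^((4:ℝ)/3+ε) := by ring
      _ ≤ (4 * (96 * Real.logb 2 n / (n:ℝ)^((4:ℝ)/3+ε) * q)) * (n:ℝ)^((4:ℝ)/3+ε) :=
        mul_le_mul_of_nonneg_right hchain (le_of_lt hnp)
      _ = 384 * Real.logb 2 n * q := by
        field_simp
        ring
end

section
/- Let r ≥ 3 be an integer and let T be a tree with at least 2 vertices in which every non-leaf vertex has degree at least r. Writing v(T), e(T) and ℓ(T) for the number of vertices, edges and leaves of T respectively, we have (v(T) − ℓ(T))/e(T) ≤ (ℓ(T) − 2)/((r − 1)(ℓ(T) − 1) − 1). -/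
open Real

/-- the inequality `(v(T) - ℓ(T))/e(T) ≤ (ℓ(T) - 2)/((r-1)(ℓ(T)-1) - 1)` for trees
whose non-leaf vertices all have degree at least `r`. -/
theorem statement_17 {V : Type*} [Fintype V] (r : ℕ) (hr : 3 ≤ r) (G : SimpleGraph V)
    (htree : G.IsTree) (hcard : 2 ≤ Fintype.card V)
    (hdeg : ∀ v, (G.neighborSet v).ncard ≠ 1 → r ≤ (G.neighborSet v).ncard) :
    ((Fintype.card V : ℝ) - (({v | (G.neighborSet v).ncard = 1} : Set V).ncard : ℝ)) /
        (G.edgeSet.ncard : ℝ) ≤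
      ((({v | (G.neighborSet v).ncard = 1} : Set V).ncard : ℝ) - 2) /
        (((r : ℝ) - 1) * ((({v | (G.neighborSet v).ncard = 1} : Set V).ncard : ℝ) - 1) - 1) := by
  classical
  have hdegeq : ∀ v, (G.neighborSet v).ncard = G.degree v := fun v => by
    have h : (G.neighborSet v) = ↑(G.neighborFinset v) := by ext; simp
    nth_rw 1 [h]; rw [Set.ncard_coe_finset]; rfl
  set n := Fintype.card V with hn
  have hleafset : ({v | (G.neighborSet v).ncard = 1} : Set V)
      = ↑(Finset.univ.filter (fun v => G.degree v = 1)) := by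
    ext v
    simp only [Set.mem_setOf_eq, Finset.coe_filter, Finset.mem_univ, true_and]
    rw [hdegeq v]
  set L := (Finset.univ.filter (fun v => G.degree v = 1)).card with hL
  set M := (Finset.univ.filter (fun v => ¬ G.degree v = 1)).card with hM
  have hLM : L + M = n := by
    rw [hL, hM, Finset.card_filter_add_card_filter_not, Finset.card_univ]
  have hedge : G.edgeSet.ncard = n - 1 := by
    rw [← SimpleGraph.coe_edgeFinset, Set.ncard_coe_finset]
    have := htree.card_edgeFinset
    omega
  -- degree sum
  have hsum : ∑ v, G.degree v = 2 * (n - 1) := by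
    rw [SimpleGraph.sum_degrees_eq_twice_card_edges]
    have := htree.card_edgeFinset
    omega
  have hsplit : ∑ v ∈ Finset.univ.filter (fun v => G.degree v = 1), G.degree v
      + ∑ v ∈ Finset.univ.filter (fun v => ¬ G.degree v = 1), G.degree v
      = 2 * (n - 1) := by
    rw [Finset.sum_filter_add_sum_filter_not, hsum]
  have h1 : ∑ v ∈ Finset.univ.filter (fun v => G.degree v = 1), G.degree v = L := by
    rw [hL, Finset.card_eq_sum_ones]
    exact Finset.sum_congr rfl (fun v hv => by simpa using (Finset.mem_filter.1 hv).2)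
  have h2 : r * M ≤ ∑ v ∈ Finset.univ.filter (fun v => ¬ G.degree v = 1), G.degree v := by
    rw [hM, Finset.card_eq_sum_ones, Finset.mul_sum]
    refine Finset.sum_le_sum (fun v hv => ?_)
    have hv1 : G.degree v ≠ 1 := (Finset.mem_filter.1 hv).2
    have := hdeg v (by rw [hdegeq v]; exact hv1)
    rw [hdegeq v] at this; omega
  have hkey : L + r * M ≤ 2 * (n - 1) := by omega
  have hrM : 3 * M ≤ r * M := Nat.mul_le_mul_right M hr
  have hL2 : 2 ≤ L := by omega
  -- pass to reals
  rw [hleafset, Set.ncard_coe_finset, ← hL, hedge]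
  have hnLM : (n : ℝ) = L + M := by exact_mod_cast hLM.symm
  have hne : ((n - 1 : ℕ) : ℝ) = (L : ℝ) + M - 1 := by
    have h1 : (1 : ℕ) ≤ n := by omega
    rw [Nat.cast_sub h1, hnLM]; push_cast; ring
  rw [hnLM, hne]
  have hkeyR : (L : ℝ) + r * M ≤ 2 * ((L : ℝ) + M - 1) := by
    have : ((L + r * M : ℕ) : ℝ) ≤ ((2 * (n - 1) : ℕ) : ℝ) := by exact_mod_cast hkey
    push_cast at this
    calc (L : ℝ) + r * M ≤ ((2 * (n - 1) : ℕ) : ℝ) := by push_cast; linarith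
      _ = 2 * ((L : ℝ) + M - 1) := by rw [Nat.cast_mul, hne]; push_cast; ring
  have hL2R : (2 : ℝ) ≤ L := by exact_mod_cast hL2
  have hrR : (3 : ℝ) ≤ r := by exact_mod_cast hr
  have hMR : (0 : ℝ) ≤ M := by positivity
  have hd1 : (0 : ℝ) < (L : ℝ) + M - 1 := by linarith
  have hd2 : (0 : ℝ) < ((r : ℝ) - 1) * ((L : ℝ) - 1) - 1 := by nlinarith
  rw [div_le_div_iff₀ hd1 hd2]
  nlinarith [mul_le_mul_of_nonneg_right (by nlinarith : ((r:ℝ) - 2) * M ≤ (L:ℝ) - 2) (by linarith : (0:ℝ) ≤ (L:ℝ) - 1)]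
end

section
/- Let r ≥ 2 be an integer and let H be a graph with minimum degree at least r. Then there exist δ > 0, c > 0 and an integer n₀ such that for all n ≥ n₀, the Turán number satisfies ex(n, H) ≥ c·n^{2 − 2/r + δ}. -/
open Real

namespace S18
open Finset

lemma card_zero_on {α : Type*} [Fintype α] [DecidableEq α] (m : ℕ) (hm : 0 < m) (A : Finset α) :
    (Finset.univ.filter (fun ω : α → Fin m => ∀ x ∈ A, (ω x : ℕ) = 0)).card
      = m ^ (Fintype.card α - A.card) := by
  rw [← Fintype.card_subtype]
  have e : {ω : α → Fin m // ∀ x ∈ A, (ω x : ℕ) = 0} ≃ ({x : α // x ∉ A} → Fin m) :=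
    { toFun := fun ω x => ω.1 x.1
      invFun := fun g => ⟨fun x => if h : x ∈ A then ⟨0, hm⟩ else g ⟨x, h⟩,
        fun x hx => by simp [hx]⟩
      left_inv := fun ω => by
        ext x
        by_cases h : x ∈ A
        · simp [h, ω.2 x h]
        · simp [h]
      right_inv := fun g => by
        ext x
        simp [x.2] }
  rw [Fintype.card_congr e, Fintype.card_fun, Fintype.card_fin]
  congr 1
  rw [Fintype.card_subtype_compl, Fintype.card_coe]

def RG (n m : ℕ) (ω : Sym2 (Fin n) → Fin m) : SimpleGraph (Fin n) where
  Adj a b := a ≠ b ∧ (ω s(a, b) : ℕ) = 0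
  symm := ⟨by
    intro a b h
    refine ⟨Ne.symm h.1, ?_⟩
    rw [Sym2.eq_swap]
    exact h.2⟩
  loopless := ⟨fun a h => h.1 rfl⟩

lemma RG_adj {n m : ℕ} (ω : Sym2 (Fin n) → Fin m) (a b : Fin n) :
    (RG n m ω).Adj a b ↔ a ≠ b ∧ (ω s(a, b) : ℕ) = 0 := Iff.rfl

lemma RG_edgeSet (n m : ℕ) (ω : Sym2 (Fin n) → Fin m) :
    (RG n m ω).edgeSet = {e : Sym2 (Fin n) | ¬ e.IsDiag ∧ (ω e : ℕ) = 0} := by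
  ext e
  induction e using Sym2.ind with
  | _ a b =>
    rw [SimpleGraph.mem_edgeSet, RG_adj]
    simp [Sym2.mk_isDiag_iff]

lemma RG_edge_card (n m : ℕ) (ω : Sym2 (Fin n) → Fin m) :
    (RG n m ω).edgeSet.ncard
      = (univ.filter (fun e : Sym2 (Fin n) => ¬ e.IsDiag ∧ (ω e : ℕ) = 0)).card := by
  rw [RG_edgeSet, ← Set.ncard_coe_finset]
  congr 1
  ext e
  simp


section
variable {W : Type*} [Fintype W] (H : SimpleGraph W)

def homSet {n : ℕ} (G : SimpleGraph (Fin n)) : Set (W → Fin n) :=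
  {f | Function.Injective f ∧ ∀ a b, H.Adj a b → G.Adj (f a) (f b)}

lemma containsCopy_iff {n : ℕ} (G : SimpleGraph (Fin n)) :
    Paper.ContainsCopy G H ↔ (homSet H G).Nonempty := by
  constructor
  · rintro ⟨f, hf⟩
    exact ⟨f, hf, fun a b h => f.map_adj h⟩
  · rintro ⟨f, hinj, hmap⟩
    exact ⟨⟨f, fun {a b} h => hmap a b h⟩, hinj⟩

lemma deletion {n : ℕ} (hE : ∃ a b : W, H.Adj a b) (G : SimpleGraph (Fin n)) :
    ∃ G' : SimpleGraph (Fin n), ¬ Paper.ContainsCopy G' H ∧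
      G.edgeSet.ncard ≤ G'.edgeSet.ncard + (homSet H G).ncard := by
  obtain ⟨a, b, hab⟩ := hE
  suffices h : ∀ k : ℕ, ∀ G : SimpleGraph (Fin n), (homSet H G).ncard = k →
      ∃ G' : SimpleGraph (Fin n), ¬ Paper.ContainsCopy G' H ∧
        G.edgeSet.ncard ≤ G'.edgeSet.ncard + k by
    obtain ⟨G', h1, h2⟩ := h _ G rfl
    exact ⟨G', h1, h2⟩
  intro k
  induction k using Nat.strong_induction_on with
  | _ k ih =>
    intro G hk
    by_cases hC : Paper.ContainsCopy G H
    · rw [containsCopy_iff] at hC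
      obtain ⟨f, hfinj, hfmap⟩ := hC
      set ed := s(f a, f b) with hed_def
      have hed : ed ∈ G.edgeSet := hfmap a b hab
      set G₂ := G.deleteEdges {ed} with hG₂
      have hsub : homSet H G₂ ⊂ homSet H G := by
        constructor
        · rintro g ⟨hg1, hg2⟩
          exact ⟨hg1, fun x y hxy => (SimpleGraph.deleteEdges_adj.1 (hg2 x y hxy)).1⟩
        · intro hsup
          have h2 := (hsup ⟨hfinj, hfmap⟩).2 a b hab
          rw [SimpleGraph.deleteEdges_adj] at h2
          exact h2.2 rfl
      have hlt : (homSet H G₂).ncard < k := by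
        rw [← hk]
        exact Set.ncard_lt_ncard hsub (Set.toFinite _)
      obtain ⟨G', hG', hle⟩ := ih _ hlt G₂ rfl
      refine ⟨G', hG', ?_⟩
      have hE2 : G.edgeSet.ncard ≤ G₂.edgeSet.ncard + 1 := by
        rw [hG₂, SimpleGraph.edgeSet_deleteEdges,
          Set.ncard_diff_singleton_add_one hed (Set.toFinite _)]
      omega
    · exact ⟨G, hC, by omega⟩


end

section
variable {W : Type*} [Fintype W] [DecidableEq W] (H : SimpleGraph W) [DecidableRel H.Adj]

lemma sum_edges (n m : ℕ) (hm : 0 < m) :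
    ∑ ω : Sym2 (Fin n) → Fin m, (RG n m ω).edgeSet.ncard
      = n.choose 2 * m ^ (Fintype.card (Sym2 (Fin n)) - 1) := by
  simp_rw [RG_edge_card, Finset.card_filter]
  rw [Finset.sum_comm]
  have step : ∀ e : Sym2 (Fin n),
      (∑ ω : Sym2 (Fin n) → Fin m, if ¬ e.IsDiag ∧ (ω e : ℕ) = 0 then 1 else 0)
        = if ¬ e.IsDiag then m ^ (Fintype.card (Sym2 (Fin n)) - 1) else 0 := by
    intro e
    by_cases hd : e.IsDiag
    · simp [hd]
    · rw [if_pos hd]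
      have : ∀ ω : Sym2 (Fin n) → Fin m,
          (¬ e.IsDiag ∧ (ω e : ℕ) = 0) ↔ (∀ x ∈ ({e} : Finset (Sym2 (Fin n))), (ω x : ℕ) = 0) := by
        intro ω; simp [hd]
      simp_rw [this]
      rw [← Finset.card_filter, card_zero_on m hm]
      simp
  rw [Finset.sum_congr rfl (fun e _ => step e)]
  rw [← Finset.sum_filter]
  rw [Finset.sum_const, smul_eq_mul]
  congr 1
  rw [← Fintype.card_subtype, Sym2.card_subtype_not_diag, Fintype.card_fin]

lemma homSet_eq_filter {n m : ℕ} (ω : Sym2 (Fin n) → Fin m) :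
    homSet H (RG n m ω) = ↑(univ.filter (fun f : W → Fin n =>
      Function.Injective f ∧ ∀ x ∈ H.edgeFinset.image (Sym2.map f), (ω x : ℕ) = 0)) := by
  ext f
  simp only [homSet, Set.mem_setOf_eq, coe_filter, mem_univ, true_and, Set.mem_setOf_eq]
  constructor
  · rintro ⟨hinj, hmap⟩
    refine ⟨hinj, ?_⟩
    intro x hx
    rw [Finset.mem_image] at hx
    obtain ⟨e, he, rfl⟩ := hx
    rw [SimpleGraph.mem_edgeFinset] at he
    induction e using Sym2.ind with
    | _ a b =>
      rw [SimpleGraph.mem_edgeSet] at he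
      rw [Sym2.map_pair_eq]
      exact (hmap a b he).2
  · rintro ⟨hinj, hω⟩
    refine ⟨hinj, fun a b hab => ⟨fun h => hab.ne (hinj h), ?_⟩⟩
    have : Sym2.map f s(a, b) ∈ H.edgeFinset.image (Sym2.map f) :=
      Finset.mem_image_of_mem _ (SimpleGraph.mem_edgeFinset.2 hab)
    rw [Sym2.map_pair_eq] at this
    exact hω _ this

lemma sum_homs (n m : ℕ) (hm : 0 < m) :
    ∑ ω : Sym2 (Fin n) → Fin m, (homSet H (RG n m ω)).ncard
      = (univ.filter (fun f : W → Fin n => Function.Injective f)).card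
          * m ^ (Fintype.card (Sym2 (Fin n)) - H.edgeFinset.card) := by
  have hcard : ∀ ω : Sym2 (Fin n) → Fin m, (homSet H (RG n m ω)).ncard
      = (univ.filter (fun f : W → Fin n =>
          Function.Injective f ∧ ∀ x ∈ H.edgeFinset.image (Sym2.map f), (ω x : ℕ) = 0)).card := by
    intro ω
    rw [homSet_eq_filter, Set.ncard_coe_finset]
  simp_rw [hcard, Finset.card_filter]
  rw [Finset.sum_comm]
  have step : ∀ f : W → Fin n,
      (∑ ω : Sym2 (Fin n) → Fin m,
        if Function.Injective f ∧ ∀ x ∈ H.edgeFinset.image (Sym2.map f), (ω x : ℕ) = 0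
        then 1 else 0)
      = if Function.Injective f
        then m ^ (Fintype.card (Sym2 (Fin n)) - H.edgeFinset.card) else 0 := by
    intro f
    by_cases hinj : Function.Injective f
    · rw [if_pos hinj]
      simp_rw [hinj, true_and]
      rw [← Finset.card_filter, card_zero_on m hm]
      rw [Finset.card_image_of_injective _ (Sym2.map.injective hinj)]
    · simp [hinj]
  rw [Finset.sum_congr rfl (fun f _ => step f)]
  rw [← Finset.sum_filter, Finset.sum_const, smul_eq_mul, Finset.card_filter]


lemma exists_good (n m : ℕ) (hm : 0 < m) (hE : ∃ a b : W, H.Adj a b) :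
    ∃ G' : SimpleGraph (Fin n), ¬ Paper.ContainsCopy G' H ∧
      (n.choose 2 : ℤ) * (m : ℤ) ^ (Fintype.card (Sym2 (Fin n)) - 1)
        - (n : ℤ) ^ (Fintype.card W)
            * (m : ℤ) ^ (Fintype.card (Sym2 (Fin n)) - H.edgeFinset.card)
        ≤ (m : ℤ) ^ (Fintype.card (Sym2 (Fin n))) * (G'.edgeSet.ncard : ℤ) := by
  haveI : NeZero m := ⟨hm.ne'⟩
  set S := Fintype.card (Sym2 (Fin n)) with hS
  set e₀ := H.edgeFinset.card with he₀
  have hKcard : Fintype.card (Sym2 (Fin n) → Fin m) = m ^ S := by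
    rw [Fintype.card_fun, Fintype.card_fin]
  set Efun : (Sym2 (Fin n) → Fin m) → ℤ := fun ω => ((RG n m ω).edgeSet.ncard : ℤ) with hEfun
  set Hfun : (Sym2 (Fin n) → Fin m) → ℤ := fun ω => ((homSet H (RG n m ω)).ncard : ℤ) with hHfun
  set I := (univ.filter (fun f : W → Fin n => Function.Injective f)).card with hI
  have hsum : ∑ ω : Sym2 (Fin n) → Fin m, (Efun ω - Hfun ω)
      = (n.choose 2 : ℤ) * (m : ℤ) ^ (S - 1) - (I : ℤ) * (m : ℤ) ^ (S - e₀) := by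
    rw [Finset.sum_sub_distrib]
    have h1 : ∑ ω : Sym2 (Fin n) → Fin m, Efun ω
        = (n.choose 2 : ℤ) * (m : ℤ) ^ (S - 1) := by
      rw [hEfun, ← Nat.cast_sum, sum_edges n m hm]
      push_cast
      ring
    have h2 : ∑ ω : Sym2 (Fin n) → Fin m, Hfun ω = (I : ℤ) * (m : ℤ) ^ (S - e₀) := by
      rw [hHfun, ← Nat.cast_sum, sum_homs H n m hm]
      push_cast
      ring
    rw [h1, h2]
  have havg : ∃ ω : Sym2 (Fin n) → Fin m,
      (n.choose 2 : ℤ) * (m : ℤ) ^ (S - 1) - (I : ℤ) * (m : ℤ) ^ (S - e₀)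
        ≤ (m : ℤ) ^ S * (Efun ω - Hfun ω) := by
    have hne : (univ : Finset (Sym2 (Fin n) → Fin m)).Nonempty := univ_nonempty
    have hle : ∑ _ω : Sym2 (Fin n) → Fin m,
          ((n.choose 2 : ℤ) * (m : ℤ) ^ (S - 1) - (I : ℤ) * (m : ℤ) ^ (S - e₀))
        ≤ ∑ ω : Sym2 (Fin n) → Fin m, (m : ℤ) ^ S * (Efun ω - Hfun ω) := by
      rw [Finset.sum_const, ← Finset.mul_sum, hsum, card_univ, hKcard, nsmul_eq_mul]
      push_cast
      ring_nf
      exact le_refl _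
    obtain ⟨ω, _, hω⟩ := Finset.exists_le_of_sum_le hne hle
    exact ⟨ω, hω⟩
  obtain ⟨ω, hω⟩ := havg
  obtain ⟨G', hfree, hdel⟩ := deletion H hE (RG n m ω)
  refine ⟨G', hfree, ?_⟩
  have hEH : Efun ω - Hfun ω ≤ (G'.edgeSet.ncard : ℤ) := by
    rw [hEfun, hHfun]
    have := hdel
    push_cast
    omega
  have hIle : (I : ℤ) ≤ (n : ℤ) ^ (Fintype.card W) := by
    have : I ≤ Fintype.card (W → Fin n) := by
      rw [← Finset.card_univ]
      exact Finset.card_filter_le _ _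
    rw [Fintype.card_fun, Fintype.card_fin] at this
    exact_mod_cast this
  have hmpow : (0 : ℤ) ≤ (m : ℤ) ^ S := by positivity
  have hpow2 : (0 : ℤ) ≤ (m : ℤ) ^ (S - e₀) := by positivity
  calc (n.choose 2 : ℤ) * (m : ℤ) ^ (S - 1)
        - (n : ℤ) ^ (Fintype.card W) * (m : ℤ) ^ (S - e₀)
      ≤ (n.choose 2 : ℤ) * (m : ℤ) ^ (S - 1) - (I : ℤ) * (m : ℤ) ^ (S - e₀) := by
        have := mul_le_mul_of_nonneg_right hIle hpow2
        linarith
    _ ≤ (m : ℤ) ^ S * (Efun ω - Hfun ω) := hω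
    _ ≤ (m : ℤ) ^ S * (G'.edgeSet.ncard : ℤ) := mul_le_mul_of_nonneg_left hEH hmpow


end
end S18

set_option maxHeartbeats 1000000 in
/-- the probabilistic deletion lower bound `ex(n, H) = Ω(n^{2 - 2/r + δ})` for
graphs `H` of minimum degree at least `r`. -/
theorem statement_18 {W : Type*} [Fintype W] [Nonempty W] (r : ℕ) (hr : 2 ≤ r)
    (H : SimpleGraph W) (hmin : ∀ v, r ≤ (H.neighborSet v).ncard) :
    ∃ δ : ℝ, 0 < δ ∧ ∃ c : ℝ, 0 < c ∧ ∃ n₀ : ℕ, ∀ n : ℕ, n₀ ≤ n →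
      c * (n : ℝ) ^ (2 - 2 / (r : ℝ) + δ) ≤ (Paper.exNumber n H : ℝ) := by
  classical
  set v := Fintype.card W with hv
  obtain ⟨w₀⟩ := ‹Nonempty W›
  have hne : (H.neighborSet w₀).Nonempty := by
    apply Set.nonempty_of_ncard_ne_zero
    have := hmin w₀
    omega
  obtain ⟨u₀, hu₀⟩ := hne
  have hE : ∃ a b : W, H.Adj a b := ⟨w₀, u₀, hu₀⟩
  have hv1 : 1 ≤ v := Fintype.card_pos
  have hrv : r + 1 ≤ v := by
    have hsub : H.neighborSet w₀ ⊆ Set.univ \ {w₀} := by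
      intro x hx
      refine ⟨trivial, fun hxx => ?_⟩
      rw [Set.mem_singleton_iff] at hxx
      subst hxx
      exact H.irrefl hx
    have h1 : (H.neighborSet w₀).ncard ≤ (Set.univ \ {w₀} : Set W).ncard :=
      Set.ncard_le_ncard hsub (Set.toFinite _)
    have h2 : (Set.univ \ {w₀} : Set W).ncard = v - 1 := by
      rw [Set.ncard_diff (Set.subset_univ _), Set.ncard_univ, Set.ncard_singleton,
        Nat.card_eq_fintype_card]
    have := hmin w₀
    omega
  have hv3 : 3 ≤ v := by omega
  set e₀ := H.edgeFinset.card with he₀def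
  have hdeg : ∀ w : W, r ≤ H.degree w := by
    intro w
    have := hmin w
    rwa [← Nat.card_coe_set_eq, Nat.card_eq_fintype_card,
      SimpleGraph.card_neighborSet_eq_degree] at this
  have h2e : r * v ≤ 2 * e₀ := by
    have hsum := SimpleGraph.sum_degrees_eq_twice_card_edges H
    have hle : v * r ≤ ∑ w : W, H.degree w := by
      have := Finset.card_nsmul_le_sum Finset.univ (fun w => H.degree w) r
        (fun w _ => hdeg w)
      rwa [Finset.card_univ, smul_eq_mul] at this
    rw [hsum] at hle
    rwa [Nat.mul_comm v r] at hle
  have he₀3 : 3 ≤ e₀ := by nlinarith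
  -- real versions
  have hrR : (2 : ℝ) ≤ (r : ℝ) := by exact_mod_cast hr
  have hr0' : (0 : ℝ) < (r : ℝ) := by linarith
  have he₀R : (3 : ℝ) ≤ (e₀ : ℝ) := by exact_mod_cast he₀3
  have he₀0 : (0 : ℝ) < (e₀ : ℝ) := by linarith
  have hvR : (3 : ℝ) ≤ (v : ℝ) := by exact_mod_cast hv3
  have h2eR : (r : ℝ) * (v : ℝ) ≤ 2 * (e₀ : ℝ) := by exact_mod_cast h2e
  set δ : ℝ := 1 / (2 * (e₀ : ℝ)) with hδdef
  have hδ0 : 0 < δ := by positivity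
  set q : ℝ := 2 / (r : ℝ) - δ with hqdef
  have hq0 : 0 < q := by
    have h3r : 3 * (r : ℝ) ≤ 2 * (e₀ : ℝ) := by nlinarith
    have h1 : 1 / (2 * (e₀ : ℝ)) ≤ 1 / (3 * (r : ℝ)) :=
      one_div_le_one_div_of_le (by positivity) h3r
    have h2 : 1 / (3 * (r : ℝ)) < 2 / (r : ℝ) := by
      rw [div_lt_div_iff₀ (by positivity) (by positivity)]
      nlinarith
    rw [hqdef, hδdef]
    linarith
  have hq1 : q ≤ 1 := by
    have h1 : 2 / (r : ℝ) ≤ 1 := by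
      rw [div_le_one hr0']
      linarith
    rw [hqdef]
    linarith
  have hqe : (v : ℝ) - 1 / 2 ≤ q * (e₀ : ℝ) := by
    have h1 : (v : ℝ) ≤ 2 * (e₀ : ℝ) / (r : ℝ) := by
      rw [le_div_iff₀ hr0']
      nlinarith
    have h2 : q * (e₀ : ℝ) = 2 * (e₀ : ℝ) / (r : ℝ) - 1 / 2 := by
      have h3 : (e₀ : ℝ) / (2 * (e₀ : ℝ)) = 1 / 2 := by
        rw [div_eq_div_iff (by positivity) (by norm_num)]
        ring
      rw [hqdef, hδdef, sub_mul, div_mul_eq_mul_div, div_mul_eq_mul_div, one_mul, h3]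
    linarith
  refine ⟨δ, hδ0, 1 / 16, by norm_num, max 256 v, fun n hn => ?_⟩
  have hn256 : (256 : ℕ) ≤ n := le_trans (le_max_left _ _) hn
  have hnv : v ≤ n := le_trans (le_max_right _ _) hn
  have hnR : (256 : ℝ) ≤ (n : ℝ) := by exact_mod_cast hn256
  have hn1R : (1 : ℝ) ≤ (n : ℝ) := by linarith
  have hn0R : (0 : ℝ) < (n : ℝ) := by linarith
  set x := (n : ℝ) ^ q with hxdef
  have hx1 : 1 ≤ x := Real.one_le_rpow hn1R hq0.le
  have hx0 : 0 < x := by linarith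
  set m := ⌈x⌉₊ with hmdef
  have hm0 : 0 < m := Nat.ceil_pos.2 hx0
  have hmx : x ≤ (m : ℝ) := Nat.le_ceil x
  have hm2x : (m : ℝ) ≤ 2 * x := by
    have := Nat.ceil_lt_add_one hx0.le
    linarith
  have hmR0 : (0 : ℝ) < (m : ℝ) := by exact_mod_cast hm0
  obtain ⟨G', hfree, hint⟩ := S18.exists_good H n m hm0 hE
  set S := Fintype.card (Sym2 (Fin n)) with hSdef
  set M := G'.edgeSet.ncard with hMdef
  have hS1 : 1 ≤ S := by
    rw [hSdef, Sym2.card, Fintype.card_fin]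
    exact Nat.choose_pos (by omega)
  have he₀S : e₀ ≤ S := by
    have h1 : e₀ ≤ Fintype.card (Sym2 W) := by
      rw [← Finset.card_univ]
      exact Finset.card_le_univ _
    rw [Sym2.card] at h1
    rw [hSdef, Sym2.card, Fintype.card_fin]
    exact le_trans h1 (Nat.choose_le_choose 2 (by omega))
  -- exNumber lower bound
  have hexN : (M : ℝ) ≤ (Paper.exNumber n H : ℝ) := by
    have hbdd : BddAbove {N : ℕ | ∃ G : SimpleGraph (Fin n),
        ¬ Paper.ContainsCopy G H ∧ N = G.edgeSet.ncard} := by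
      refine ⟨Fintype.card (Sym2 (Fin n)), ?_⟩
      rintro N ⟨G, -, rfl⟩
      calc G.edgeSet.ncard
          ≤ (Set.univ : Set (Sym2 (Fin n))).ncard :=
            Set.ncard_le_ncard (Set.subset_univ _) (Set.toFinite _)
        _ = _ := by rw [Set.ncard_univ, Nat.card_eq_fintype_card]
    have hmem : M ∈ {N : ℕ | ∃ G : SimpleGraph (Fin n),
        ¬ Paper.ContainsCopy G H ∧ N = G.edgeSet.ncard} := ⟨G', hfree, rfl⟩
    have : M ≤ Paper.exNumber n H := le_csSup hbdd hmem
    exact_mod_cast this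
  -- cast key inequality to ℝ
  have hintR : (n.choose 2 : ℝ) * (m : ℝ) ^ (S - 1) - (n : ℝ) ^ v * (m : ℝ) ^ (S - e₀)
      ≤ (m : ℝ) ^ S * (M : ℝ) := by exact_mod_cast hint
  have hsplit1 : (m : ℝ) ^ (S - 1) = (m : ℝ) ^ (S - e₀) * (m : ℝ) ^ (e₀ - 1) := by
    rw [← pow_add]
    congr 1
    omega
  have hsplit2 : (m : ℝ) ^ S = (m : ℝ) ^ (S - e₀) * (m : ℝ) ^ e₀ := by
    rw [← pow_add]
    congr 1
    omega
  rw [hsplit1, hsplit2] at hintR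
  have hR0 : (0 : ℝ) < (m : ℝ) ^ (S - e₀) := by positivity
  have hkey : (n.choose 2 : ℝ) * (m : ℝ) ^ (e₀ - 1) - (n : ℝ) ^ v
      ≤ (m : ℝ) ^ e₀ * (M : ℝ) := by
    have h' : (m : ℝ) ^ (S - e₀) * ((n.choose 2 : ℝ) * (m : ℝ) ^ (e₀ - 1) - (n : ℝ) ^ v)
        ≤ (m : ℝ) ^ (S - e₀) * ((m : ℝ) ^ e₀ * (M : ℝ)) := by linarith [hintR]
    exact (mul_le_mul_iff_right₀ hR0).1 h'
  -- goal reduction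
  have hexp : 2 - 2 / (r : ℝ) + δ = 2 - q := by rw [hqdef]; ring
  rw [hexp]
  set Z := (n : ℝ) ^ (2 - q) with hZdef
  have hZ0 : 0 < Z := Real.rpow_pos_of_pos hn0R _
  have hpe10 : (0 : ℝ) ≤ (m : ℝ) ^ (e₀ - 1) := by positivity
  -- main bound pieces
  have hA : (n : ℝ) ^ 2 / 4 ≤ (n.choose 2 : ℝ) := by
    rw [Nat.cast_choose_two]
    nlinarith
  have hm_e1 : (n : ℝ) ^ (q * ((e₀ : ℝ) - 1)) ≤ (m : ℝ) ^ (e₀ - 1) := by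
    have h1 : x ^ (e₀ - 1) ≤ (m : ℝ) ^ (e₀ - 1) := pow_le_pow_left₀ hx0.le hmx _
    have h2 : x ^ (e₀ - 1) = (n : ℝ) ^ (q * ((e₀ : ℝ) - 1)) := by
      rw [hxdef, ← Real.rpow_natCast ((n : ℝ) ^ q) (e₀ - 1), ← Real.rpow_mul hn0R.le]
      congr 1
      rw [Nat.cast_sub (by omega)]
      push_cast
      ring
    linarith
  have hm_e : (m : ℝ) ^ e₀ = (m : ℝ) ^ (e₀ - 1) * (m : ℝ) := by
    rw [← pow_succ]
    congr 1
    omega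
  have hZx : Z * x = (n : ℝ) ^ 2 := by
    rw [hZdef, hxdef, ← Real.rpow_add hn0R]
    norm_num
  have hZm : 1 / 16 * Z * (m : ℝ) ^ e₀ ≤ 1 / 8 * (n : ℝ) ^ 2 * (m : ℝ) ^ (e₀ - 1) := by
    rw [hm_e]
    have h1 : Z * (m : ℝ) ≤ Z * (2 * x) := mul_le_mul_of_nonneg_left hm2x hZ0.le
    nlinarith
  have hnv2 : (n : ℝ) ^ v ≤ 1 / 8 * (n : ℝ) ^ 2 * (m : ℝ) ^ (e₀ - 1) := by
    have h16 : (16 : ℝ) ≤ (n : ℝ) ^ ((1 : ℝ) / 2) := by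
      have h256 : ((256 : ℝ)) ^ ((1 : ℝ) / 2) = 16 := by
        rw [show (256 : ℝ) = 16 ^ (2 : ℕ) by norm_num, ← Real.rpow_natCast (16 : ℝ) 2,
          ← Real.rpow_mul (by norm_num)]
        norm_num
      calc (16 : ℝ) = ((256 : ℝ)) ^ ((1 : ℝ) / 2) := h256.symm
        _ ≤ (n : ℝ) ^ ((1 : ℝ) / 2) := Real.rpow_le_rpow (by norm_num) hnR (by norm_num)
    set t : ℝ := 2 + q * ((e₀ : ℝ) - 1) - (v : ℝ) with htdef
    have ht : 1 / 2 ≤ t := by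
      rw [htdef]
      nlinarith
    have hsplit : (n : ℝ) ^ (2 + q * ((e₀ : ℝ) - 1)) = (n : ℝ) ^ (v : ℝ) * (n : ℝ) ^ t := by
      rw [← Real.rpow_add hn0R]
      congr 1
      rw [htdef]
      ring
    have hnt : (n : ℝ) ^ ((1 : ℝ) / 2) ≤ (n : ℝ) ^ t :=
      Real.rpow_le_rpow_of_exponent_le hn1R ht
    have hnv' : (n : ℝ) ^ (v : ℝ) = (n : ℝ) ^ v := Real.rpow_natCast _ _
    have hcomb : (n : ℝ) ^ v * 16 ≤ (n : ℝ) ^ (2 + q * ((e₀ : ℝ) - 1)) := by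
      rw [hsplit, hnv']
      have h0 : (0 : ℝ) ≤ (n : ℝ) ^ v := by positivity
      exact mul_le_mul_of_nonneg_left (le_trans h16 hnt) h0
    have hsplit2' : (n : ℝ) ^ (2 + q * ((e₀ : ℝ) - 1))
        = (n : ℝ) ^ 2 * (n : ℝ) ^ (q * ((e₀ : ℝ) - 1)) := by
      rw [Real.rpow_add hn0R]
      congr 1
      rw [← Real.rpow_natCast (n : ℝ) 2]
      norm_num
    have hmono : (n : ℝ) ^ (2 + q * ((e₀ : ℝ) - 1)) ≤ (n : ℝ) ^ 2 * (m : ℝ) ^ (e₀ - 1) := by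
      rw [hsplit2']
      have h0 : (0 : ℝ) ≤ (n : ℝ) ^ 2 := by positivity
      exact mul_le_mul_of_nonneg_left hm_e1 h0
    have hnv0 : (0 : ℝ) ≤ (n : ℝ) ^ v := by positivity
    linarith
  -- assemble
  have goal2 : 1 / 16 * Z * (m : ℝ) ^ e₀ + (n : ℝ) ^ v
      ≤ (n.choose 2 : ℝ) * (m : ℝ) ^ (e₀ - 1) := by
    have h1 : (n : ℝ) ^ 2 / 4 * (m : ℝ) ^ (e₀ - 1) ≤ (n.choose 2 : ℝ) * (m : ℝ) ^ (e₀ - 1) :=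
      mul_le_mul_of_nonneg_right hA hpe10
    linarith
  have hfin : 1 / 16 * Z ≤ (M : ℝ) := by
    have hp : (0 : ℝ) < (m : ℝ) ^ e₀ := by positivity
    have h2 : 1 / 16 * Z * (m : ℝ) ^ e₀ ≤ (M : ℝ) * (m : ℝ) ^ e₀ := by linarith
    exact le_of_mul_le_mul_right h2 hp
  linarith
end
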